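/- arXiv:2206.07594 — 7 statements merged into one kernel-verified Lean document; each statement's English description precedes it below -/
import Mathlib

section
/- Let β̂ be a minimizer of β ↦ Σ_{i=1}^n λ_o² H(n ŵ'_i (y_i − X̃_iᵀ β)/(λ_o √n)) + λ_s ‖β‖₁, set θ_η = (β̂ − β*) η for η ∈ (0,1), and write r_{v,i} = ŵ'_i n (y_i − X̃_iᵀ v)/(λ_o √n). Suppose that for every η ∈ (0,1) with ‖θ_η‖₂ = r ≤ 1: (i) |λ_o √n Σ_{i=1}^n ŵ'_i h(r_{β*,i}) X̃_iᵀ θ_η| ≤ r_{a,2} ‖θ_η‖₂ + r_{a,1} ‖θ_η‖₁, and (ii) b₁ ‖θ_η‖₂² − r_{b,2} ‖θ_η‖₂ − r_{b,1} ≤ Σ_{i=1}^n λ_o √n ŵ'_i {−h(r_{β*+θ_η,i}) + h(r_{β*,i})} X̃_iᵀ θ_η, where b₁ > 0 and r_{a,1}, r_{a,2}, r_{b,1}, r_{b,2} ≥ 0. Suppose further that λ_s − C_s > 0 and (λ_s + C_s)/(λ_s − C_s) ≤ 2, where C_s = r_{a,2}/(3√s) + r_{a,1}. Then for any r satisfying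 (r_{a,2} + r_{b,2} + 3(r_{a,1} + λ_s)√s + √(b₁ r_{b,1}))/b₁ < r, the estimator satisfies ‖β̂ − β*‖₂ ≤ r. -/
open MeasureTheory ProbabilityTheory Matrix Finset Real

noncomputable section

namespace RobustSparse

/-- coordinatewise truncation at level `τ`: `x̃ⱼ = sgn(xⱼ) * min |xⱼ| τ`. -/
def trunc {d : ℕ} (τ : ℝ) (x : Fin d → ℝ) : Fin d → ℝ :=
  fun j => Real.sign (x j) * min |x j| τ

/-- derivative of the Huber loss: `h(t) = t` for `|t| ≤ 1`, `sgn(t)` otherwise. -/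
def hub (t : ℝ) : ℝ := if |t| ≤ 1 then t else Real.sign t

/-- the Huber loss. -/
def Huber (t : ℝ) : ℝ := if |t| ≤ 1 then t ^ 2 / 2 else |t| - 1 / 2

/-- ℓ1 norm of a vector. -/
def l1 {d : ℕ} (v : Fin d → ℝ) : ℝ := ∑ j, |v j|

/-- ℓ2 norm of a vector. -/
def l2 {d : ℕ} (v : Fin d → ℝ) : ℝ := Real.sqrt (∑ j, v j ^ 2)

/-- euclidean inner product. -/
def ip {d : ℕ} (a b : Fin d → ℝ) : ℝ := ∑ j, a j * b j

/-- entrywise ℓ1 norm of a matrix. -/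
def mat1 {d : ℕ} (M : Matrix (Fin d) (Fin d) ℝ) : ℝ := ∑ i, ∑ j, |M i j|

/-- Frobenius inner product `⟨A,B⟩ = Tr(AᵀB)`. -/
def minner {d : ℕ} (A B : Matrix (Fin d) (Fin d) ℝ) : ℝ := ∑ i, ∑ j, A i j * B i j

/-- the constraint set `𝔐_r = {M : Tr M ≤ r², M ⪰ 0}`. -/
def Mr (d : ℕ) (r : ℝ) : Set (Matrix (Fin d) (Fin d) ℝ) :=
  {M | M.trace ≤ r ^ 2 ∧ M.PosSemidef}

/-- ℓ2 → ℓ2 operator norm of a matrix. -/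
def opNorm {d : ℕ} (M : Matrix (Fin d) (Fin d) ℝ) : ℝ :=
  ‖Matrix.toEuclideanCLM (𝕜 := ℝ) M‖

/-- the constrained probability simplex `Δ^{n-1}`. -/
def simplex (n : ℕ) (ε : ℝ) : Set (Fin n → ℝ) :=
  {w | (∀ i, 0 ≤ w i ∧ w i ≤ 1) ∧ ∑ i, w i = 1 ∧ ∀ i, |w i| ≤ 1 / (n * (1 - ε))}

/-- an i.i.d. (independent, identically distributed, measurable) family. -/
def IsIID {Ω E : Type*} [MeasurableSpace Ω] [MeasurableSpace E]
    (μ : Measure Ω) {n : ℕ} (f : Fin n → Ω → E) : Prop :=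
  (∀ i, Measurable (f i)) ∧ iIndepFun f μ ∧
    ∀ i j, Measure.map (f i) μ = Measure.map (f j) μ


lemma final_contra (b1 r ra2 rb2 rb1 X T : ℝ) (hb1 : 0 < b1) (hr0 : 0 < r)
    (hXr : rb1 ≤ X * r) (hrB : ra2 + rb2 + T + X < b1 * r)
    (hfin : b1 * r ^ 2 ≤ rb2 * r + rb1 + ra2 * r + T * r) : False := by
  nlinarith [mul_lt_mul_of_pos_right hrB hr0]

/-- The Huber loss is convex with subgradient `hub`. -/
lemma huber_subgrad (u v : ℝ) : Huber u + hub u * (v - u) ≤ Huber v := by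
  unfold Huber hub
  rcases le_or_gt |u| 1 with hu | hu <;> rcases le_or_gt |v| 1 with hv | hv
  · rw [if_pos hu, if_pos hu, if_pos hv]
    nlinarith [sq_nonneg (v - u)]
  · rw [if_pos hu, if_pos hu, if_neg (not_le.mpr hv)]
    rcases abs_le.mp hu with ⟨h1, h2⟩
    rcases le_or_gt 0 v with h | h
    · rw [abs_of_nonneg h]; rw [abs_of_nonneg h] at hv; nlinarith
    · rw [abs_of_neg h]; rw [abs_of_neg h] at hv; nlinarith
  · rw [if_neg (not_le.mpr hu), if_neg (not_le.mpr hu), if_pos hv]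
    rcases le_or_gt 0 u with h | h
    · rw [abs_of_nonneg h] at *
      rw [Real.sign_of_pos (by linarith : (0:ℝ) < u)]
      nlinarith [sq_nonneg (v - 1)]
    · rw [abs_of_neg h] at *
      rw [Real.sign_of_neg h]
      nlinarith [sq_nonneg (v + 1)]
  · rw [if_neg (not_le.mpr hu), if_neg (not_le.mpr hu), if_neg (not_le.mpr hv)]
    rcases le_or_gt 0 u with h | h
    · rw [abs_of_nonneg h] at *
      rw [Real.sign_of_pos (by linarith : (0:ℝ) < u)]
      nlinarith [le_abs_self v]
    · rw [abs_of_neg h] at *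
      rw [Real.sign_of_neg h]
      nlinarith [neg_abs_le v]

set_option maxHeartbeats 2000000

/-- Proposition: deterministic error bound for the weighted
ℓ1-penalized Huber regression estimator. -/
theorem statement2
    {d n s : ℕ} (hn : 0 < n)
    (y : Fin n → ℝ) (Xt : Fin n → Fin d → ℝ)
    (w' : Fin n → ℝ) (hw' : ∀ i, w' i = 0 ∨ w' i = 1 / n)
    (βstar : Fin d → ℝ) (hs : (Finset.univ.filter fun j => βstar j ≠ 0).card = s)
    (lamo lams : ℝ) (hlamo : 0 < lamo) (hlams : 0 < lams)
    (βhat : Fin d → ℝ)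
    (hmin : ∀ β : Fin d → ℝ,
      (∑ i, lamo ^ 2 * Huber (n * w' i * (y i - ip (Xt i) βhat) / (lamo * Real.sqrt n))
          + lams * l1 βhat)
        ≤ ∑ i, lamo ^ 2 * Huber (n * w' i * (y i - ip (Xt i) β) / (lamo * Real.sqrt n))
          + lams * l1 β)
    (b1 ra1 ra2 rb1 rb2 r : ℝ)
    (hb1 : 0 < b1) (hra1 : 0 ≤ ra1) (hra2 : 0 ≤ ra2) (hrb1 : 0 ≤ rb1) (hrb2 : 0 ≤ rb2)
    (hr1 : r ≤ 1)
    (hgrad : ∀ η : ℝ, 0 < η → η < 1 →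
      l2 (fun j => η * (βhat j - βstar j)) = r →
      |lamo * Real.sqrt n * ∑ i, w' i *
          hub (w' i * n * (y i - ip (Xt i) βstar) / (lamo * Real.sqrt n))
          * ip (Xt i) (fun j => η * (βhat j - βstar j))|
        ≤ ra2 * l2 (fun j => η * (βhat j - βstar j))
          + ra1 * l1 (fun j => η * (βhat j - βstar j)))
    (hlower : ∀ η : ℝ, 0 < η → η < 1 →
      l2 (fun j => η * (βhat j - βstar j)) = r →
      b1 * l2 (fun j => η * (βhat j - βstar j)) ^ 2
          - rb2 * l2 (fun j => η * (βhat j - βstar j)) - rb1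
        ≤ ∑ i, lamo * Real.sqrt n * w' i *
            (- hub (w' i * n *
                (y i - ip (Xt i) (fun j => βstar j + η * (βhat j - βstar j)))
                  / (lamo * Real.sqrt n))
              + hub (w' i * n * (y i - ip (Xt i) βstar) / (lamo * Real.sqrt n)))
            * ip (Xt i) (fun j => η * (βhat j - βstar j)))
    (hCs1 : 0 < lams - (ra2 / (3 * Real.sqrt s) + ra1))
    (hCs2 : (lams + (ra2 / (3 * Real.sqrt s) + ra1))
        / (lams - (ra2 / (3 * Real.sqrt s) + ra1)) ≤ 2)
    (hrlow : (ra2 + rb2 + 3 * (ra1 + lams) * Real.sqrt s + Real.sqrt (b1 * rb1)) / b1 < r) :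
    l2 (fun j => βhat j - βstar j) ≤ r := by
  -- basic positivity facts
  have hncast : (0:ℝ) < (n:ℝ) := by exact_mod_cast hn
  have hsqn : (0:ℝ) < Real.sqrt n := Real.sqrt_pos.mpr hncast
  have hnn : Real.sqrt n * Real.sqrt n = (n:ℝ) := Real.mul_self_sqrt (Nat.cast_nonneg n)
  have hss : (0:ℝ) ≤ Real.sqrt s := Real.sqrt_nonneg _
  have hXs : (0:ℝ) ≤ Real.sqrt (b1 * rb1) := Real.sqrt_nonneg _
  have hnum0 : 0 ≤ ra2 + rb2 + 3 * (ra1 + lams) * Real.sqrt s + Real.sqrt (b1 * rb1) := by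
    have : 0 ≤ 3 * (ra1 + lams) * Real.sqrt s := by positivity
    linarith
  have hr0 : 0 < r := lt_of_le_of_lt (div_nonneg hnum0 hb1.le) hrlow
  have hrB : ra2 + rb2 + 3 * (ra1 + lams) * Real.sqrt s + Real.sqrt (b1 * rb1) < b1 * r := by
    have := (div_lt_iff₀ hb1).mp hrlow; linarith
  have hXr : rb1 ≤ Real.sqrt (b1 * rb1) * r := by
    have h1 : Real.sqrt (b1 * rb1) * Real.sqrt (b1 * rb1) = b1 * rb1 :=
      Real.mul_self_sqrt (mul_nonneg hb1.le hrb1)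
    have ht : 0 ≤ 3 * (ra1 + lams) * Real.sqrt s := by positivity
    have h2 : Real.sqrt (b1 * rb1) ≤ b1 * r := by linarith
    have h3 := mul_le_mul_of_nonneg_left h2 hXs
    have h4 : b1 * rb1 ≤ b1 * (Real.sqrt (b1 * rb1) * r) := by linarith [h3, h1]
    exact le_of_mul_le_mul_left h4 hb1
  by_contra hcon
  push_neg at hcon
  set R := l2 (fun j => βhat j - βstar j) with hRdef
  have hR0 : 0 < R := lt_trans hr0 hcon
  set η := r / R with hηdef
  have hη0 : 0 < η := div_pos hr0 hR0
  have hη1 : η < 1 := (div_lt_one hR0).mpr hcon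
  -- the rescaled difference has ℓ2 norm exactly r
  have hl2 : l2 (fun j => η * (βhat j - βstar j)) = r := by
    have hsum : ∑ j, (η * (βhat j - βstar j)) ^ 2 = η ^ 2 * ∑ j, (βhat j - βstar j) ^ 2 := by
      rw [Finset.mul_sum]; exact Finset.sum_congr rfl fun j _ => by ring
    show Real.sqrt (∑ j, (η * (βhat j - βstar j)) ^ 2) = r
    rw [hsum, Real.sqrt_mul (sq_nonneg η), Real.sqrt_sq hη0.le]
    show η * R = r
    rw [hηdef]; field_simp
  have hG := hgrad η hη0 hη1 hl2
  have hL := hlower η hη0 hη1 hl2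
  rw [hl2] at hG hL
  -- abbreviations
  set c : Fin n → ℝ := fun i => w' i * n * (y i - ip (Xt i) βstar) / (lamo * Real.sqrt n) with hc
  set p : Fin n → ℝ :=
    fun i => w' i * n * (ip (Xt i) fun j => βhat j - βstar j) / (lamo * Real.sqrt n) with hp
  -- inner product linearity facts
  have ipsub : ∀ i, ip (Xt i) βhat = ip (Xt i) βstar + ip (Xt i) (fun j => βhat j - βstar j) := by
    intro i; unfold ip; rw [← Finset.sum_add_distrib]
    exact Finset.sum_congr rfl fun j _ => by ring
  have ipη : ∀ i, ip (Xt i) (fun j => η * (βhat j - βstar j))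
      = η * ip (Xt i) (fun j => βhat j - βstar j) := by
    intro i; unfold ip; rw [Finset.mul_sum]
    exact Finset.sum_congr rfl fun j _ => by ring
  have ipβη : ∀ i, ip (Xt i) (fun j => βstar j + η * (βhat j - βstar j))
      = ip (Xt i) βstar + η * ip (Xt i) (fun j => βhat j - βstar j) := by
    intro i; unfold ip; rw [Finset.mul_sum, ← Finset.sum_add_distrib]
    exact Finset.sum_congr rfl fun j _ => by ring
  -- argument identities
  have argη : ∀ i, w' i * n *
      (y i - ip (Xt i) fun j => βstar j + η * (βhat j - βstar j)) / (lamo * Real.sqrt n)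
      = c i - η * p i := by
    intro i; rw [ipβη i, hc, hp]; ring
  have arghat : ∀ i, (n:ℝ) * w' i * (y i - ip (Xt i) βhat) / (lamo * Real.sqrt n)
      = c i - p i := by
    intro i; rw [ipsub i, hc, hp]; ring
  have argstar : ∀ i, (n:ℝ) * w' i * (y i - ip (Xt i) βstar) / (lamo * Real.sqrt n) = c i := by
    intro i; rw [hc]; ring
  have argsη : ∀ i, (n:ℝ) * w' i *
      (y i - ip (Xt i) fun j => βstar j + η * (βhat j - βstar j)) / (lamo * Real.sqrt n)
      = c i - η * p i := by
    intro i; rw [ipβη i, hc, hp]; ring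
  -- key scaling identity
  have key : ∀ (i : Fin n) (x : ℝ),
      lamo * Real.sqrt n * (w' i * x * ip (Xt i) fun j => η * (βhat j - βstar j))
      = lamo ^ 2 * (x * (η * p i)) := by
    intro i x
    rw [ipη i, hp]
    field_simp
    linear_combination (w' i * x * ip (Xt i) fun j => βhat j - βstar j) * hnn
  -- sums
  set S0 := ∑ i, lamo ^ 2 * Huber (c i) with hS0
  set Sη := ∑ i, lamo ^ 2 * Huber (c i - η * p i) with hSη
  set S1 := ∑ i, lamo ^ 2 * Huber (c i - p i) with hS1
  set Ga := ∑ i, lamo ^ 2 * (hub (c i) * p i) with hGadef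
  set Gb := ∑ i, lamo ^ 2 * (hub (c i - η * p i) * p i) with hGbdef
  set T1 := l1 (fun j => η * (βhat j - βstar j)) with hT1def
  -- rewrite the gradient hypothesis
  have hGa : (lamo * Real.sqrt n * ∑ i, w' i *
      hub (w' i * n * (y i - ip (Xt i) βstar) / (lamo * Real.sqrt n))
      * ip (Xt i) fun j => η * (βhat j - βstar j)) = η * Ga := by
    rw [Finset.mul_sum, hGadef, Finset.mul_sum]
    refine Finset.sum_congr rfl fun i _ => ?_
    have hk := key i (hub (c i))
    rw [show w' i * n * (y i - ip (Xt i) βstar) / (lamo * Real.sqrt n) = c i from rfl]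
    linear_combination hk
  rw [hGa] at hG
  -- rewrite the lower-bound hypothesis
  have hLrw : (∑ i, lamo * Real.sqrt n * w' i *
      (- hub (w' i * n *
          (y i - ip (Xt i) fun j => βstar j + η * (βhat j - βstar j)) / (lamo * Real.sqrt n))
        + hub (w' i * n * (y i - ip (Xt i) βstar) / (lamo * Real.sqrt n)))
      * ip (Xt i) fun j => η * (βhat j - βstar j)) = η * Ga - η * Gb := by
    rw [hGadef, hGbdef, Finset.mul_sum, Finset.mul_sum, ← Finset.sum_sub_distrib]
    refine Finset.sum_congr rfl fun i _ => ?_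
    rw [show w' i * n * (y i - ip (Xt i) βstar) / (lamo * Real.sqrt n) = c i from rfl,
      argη i]
    have hk := key i (-hub (c i - η * p i) + hub (c i))
    linear_combination hk
  rw [hLrw] at hL
  -- convexity inequalities for the sums
  have hA : S0 - η * Ga ≤ Sη := by
    rw [hS0, hSη, hGadef, Finset.mul_sum, ← Finset.sum_sub_distrib]
    refine Finset.sum_le_sum fun i _ => ?_
    linarith [mul_le_mul_of_nonneg_left (huber_subgrad (c i) (c i - η * p i)) (sq_nonneg lamo)]
  have hB2 : Sη - (1 - η) * Gb ≤ S1 := by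
    rw [hSη, hS1, hGbdef, Finset.mul_sum, ← Finset.sum_sub_distrib]
    refine Finset.sum_le_sum fun i _ => ?_
    linarith [mul_le_mul_of_nonneg_left
      (huber_subgrad (c i - η * p i) (c i - p i)) (sq_nonneg lamo)]
  have hConv : Sη ≤ (1 - η) * S0 + η * S1 := by
    rw [hSη, hS0, hS1, Finset.mul_sum, Finset.mul_sum, ← Finset.sum_add_distrib]
    refine Finset.sum_le_sum fun i _ => ?_
    have h1 := huber_subgrad (c i - η * p i) (c i)
    have h2 := huber_subgrad (c i - η * p i) (c i - p i)
    have h3 : Huber (c i - η * p i) ≤ (1 - η) * Huber (c i) + η * Huber (c i - p i) := by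
      linarith [mul_le_mul_of_nonneg_left h1 (by linarith : (0:ℝ) ≤ 1 - η),
        mul_le_mul_of_nonneg_left h2 hη0.le]
    linarith [mul_le_mul_of_nonneg_left h3 (sq_nonneg lamo)]
  -- the two instances of minimality
  have ehat : (∑ i, lamo ^ 2 * Huber ((n:ℝ) * w' i * (y i - ip (Xt i) βhat)
      / (lamo * Real.sqrt n))) = S1 := by
    rw [hS1]; exact Finset.sum_congr rfl fun i _ => by rw [arghat i]
  have estar : (∑ i, lamo ^ 2 * Huber ((n:ℝ) * w' i * (y i - ip (Xt i) βstar)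
      / (lamo * Real.sqrt n))) = S0 := by
    rw [hS0]; exact Finset.sum_congr rfl fun i _ => by rw [argstar i]
  have eη : (∑ i, lamo ^ 2 * Huber ((n:ℝ) * w' i *
      (y i - ip (Xt i) fun j => βstar j + η * (βhat j - βstar j))
      / (lamo * Real.sqrt n))) = Sη := by
    rw [hSη]; exact Finset.sum_congr rfl fun i _ => by rw [argsη i]
  have hmin1 := hmin βstar
  have hmin2 := hmin (fun j => βstar j + η * (βhat j - βstar j))
  rw [ehat, estar] at hmin1
  rw [ehat, eη] at hmin2
  -- ℓ1 facts
  have hT1η : T1 = η * l1 (fun j => βhat j - βstar j) := by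
    rw [hT1def]; unfold l1; rw [Finset.mul_sum]
    exact Finset.sum_congr rfl fun j _ => by rw [abs_mul, abs_of_pos hη0]
  have hT1nn : 0 ≤ T1 := by
    rw [hT1def]; unfold l1; exact Finset.sum_nonneg fun j _ => abs_nonneg _
  have hl1θnn : 0 ≤ l1 (fun j => βhat j - βstar j) :=
    Finset.sum_nonneg fun j _ => abs_nonneg _
  have hl1conv : l1 (fun j => βstar j + η * (βhat j - βstar j))
      ≤ (1 - η) * l1 βstar + η * l1 βhat := by
    unfold l1
    rw [Finset.mul_sum, Finset.mul_sum, ← Finset.sum_add_distrib]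
    refine Finset.sum_le_sum fun j _ => ?_
    show |βstar j + η * (βhat j - βstar j)| ≤ (1 - η) * |βstar j| + η * |βhat j|
    rw [show βstar j + η * (βhat j - βstar j) = (1 - η) * βstar j + η * βhat j from by ring]
    calc |(1 - η) * βstar j + η * βhat j| ≤ |(1 - η) * βstar j| + |η * βhat j| := abs_add_le _ _
      _ = (1 - η) * |βstar j| + η * |βhat j| := by
          rw [abs_mul, abs_mul, abs_of_nonneg (by linarith : (0:ℝ) ≤ 1 - η),
            abs_of_pos hη0]
  have hl1B : l1 (fun j => βstar j + η * (βhat j - βstar j)) - l1 βhat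
      ≤ (1 - η) * l1 (fun j => βhat j - βstar j) := by
    unfold l1
    rw [sub_le_iff_le_add, Finset.mul_sum, ← Finset.sum_add_distrib]
    refine Finset.sum_le_sum fun j _ => ?_
    have habs := abs_sub_abs_le_abs_sub (βstar j + η * (βhat j - βstar j)) (βhat j)
    have : |βstar j + η * (βhat j - βstar j) - βhat j| = (1 - η) * |βhat j - βstar j| := by
      rw [show βstar j + η * (βhat j - βstar j) - βhat j = -((1 - η) * (βhat j - βstar j))
        from by ring, abs_neg, abs_mul, abs_of_nonneg (by linarith : (0:ℝ) ≤ 1 - η)]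
    linarith
  -- cone inequality : λs (‖β*+θη‖₁ - ‖β*‖₁) ≤ η Ga
  have hcone : lams * (l1 (fun j => βstar j + η * (βhat j - βstar j)) - l1 βstar)
      ≤ η * Ga := by
    have m1 := mul_le_mul_of_nonneg_left hmin1 hη0.le
    have m2 := mul_le_mul_of_nonneg_left hl1conv hlams.le
    linarith [hConv, hA, m1, m2]
  -- bound on -η Gb (general case)
  have hGbB : -Gb ≤ lams * l1 (fun j => βhat j - βstar j) := by
    have h1 : Sη - S1 ≤ (1 - η) * Gb := by linarith [hB2]
    have h2 : S1 - Sη ≤ lams * ((1 - η) * l1 (fun j => βhat j - βstar j)) := by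
      have := mul_le_mul_of_nonneg_left hl1B hlams.le
      linarith [hmin2]
    have h3 : (1 - η) * (-Gb) ≤ (1 - η) * (lams * l1 (fun j => βhat j - βstar j)) := by
      linarith [h1, h2]
    exact (mul_le_mul_iff_right₀ (by linarith : (0:ℝ) < 1 - η)).mp h3
  -- main inequality
  have habs1 : η * Ga ≤ ra2 * r + ra1 * T1 := le_trans (le_abs_self _) hG
  have habs2 : -(η * Ga) ≤ ra2 * r + ra1 * T1 := le_trans (neg_le_abs _) hG
  have hmain : b1 * r ^ 2 - rb2 * r - rb1 ≤ ra2 * r + ra1 * T1 + lams * T1 := by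
    have h4 : -(η * Gb) ≤ lams * T1 := by
      have h4' := mul_le_mul_of_nonneg_left hGbB hη0.le
      rw [hT1η]; linarith [h4']
    linarith [hL, habs1]
  -- case analysis on s
  rcases Nat.eq_zero_or_pos s with hs0 | hspos
  · -- s = 0 : βstar is identically zero
    subst hs0
    have hSempty : (Finset.univ.filter fun j => βstar j ≠ 0) = ∅ := Finset.card_eq_zero.mp hs
    have hβ0 : ∀ j, βstar j = 0 := by
      intro j; by_contra hj
      have : j ∈ (Finset.univ.filter fun j => βstar j ≠ 0) :=
        Finset.mem_filter.mpr ⟨Finset.mem_univ j, hj⟩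
      rw [hSempty] at this; exact absurd this (Finset.notMem_empty j)
    have hsqrt0 : Real.sqrt (0:ℕ) = 0 := by simp
    rw [hsqrt0] at hCs1 hrB
    have hra1lams : ra1 ≤ lams := by
      rw [show (3:ℝ) * 0 = 0 from by ring, div_zero] at hCs1; linarith
    -- refined bound: -η Gb ≤ -λs T1
    have hl1star : l1 βstar = 0 := by
      unfold l1; exact Finset.sum_eq_zero fun j _ => by rw [hβ0 j, abs_zero]
    have hl1βη : l1 (fun j => βstar j + η * (βhat j - βstar j)) = T1 := by
      rw [hT1def]; unfold l1
      exact Finset.sum_congr rfl fun j _ => by simp [hβ0 j]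
    have hl1hat : l1 βhat = l1 (fun j => βhat j - βstar j) := by
      unfold l1; exact Finset.sum_congr rfl fun j _ => by simp [hβ0 j]
    have hGbB0 : -Gb ≤ -(lams * l1 (fun j => βhat j - βstar j)) := by
      have h2 : S1 - Sη ≤ lams * (T1 - l1 βhat) := by
        have := hmin2; rw [hl1βη] at this; linarith
      have hTeq : T1 - l1 βhat = -((1 - η) * l1 (fun j => βhat j - βstar j)) := by
        rw [hT1η, hl1hat]; ring
      have h3 : (1 - η) * (-Gb) ≤ (1 - η) * (-(lams * l1 (fun j => βhat j - βstar j))) := by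
        rw [hTeq] at h2; linarith [hB2, h2]
      exact (mul_le_mul_iff_right₀ (by linarith : (0:ℝ) < 1 - η)).mp h3
    have hmain0 : b1 * r ^ 2 - rb2 * r - rb1 ≤ ra2 * r := by
      have h4 : -(η * Gb) ≤ -(lams * T1) := by
        have h4' := mul_le_mul_of_nonneg_left hGbB0 hη0.le
        rw [hT1η]; linarith [h4']
      have h5 : ra1 * T1 - lams * T1 ≤ 0 := by
        linarith [mul_nonneg (by linarith : (0:ℝ) ≤ lams - ra1) hT1nn]
      linarith [hL, habs1]
    rw [show (3:ℝ) * (ra1 + lams) * 0 = 0 from by ring] at hrB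
    exact final_contra b1 r ra2 rb2 rb1 (Real.sqrt (b1 * rb1)) 0 hb1 hr0 hXr
      (by linarith) (by linarith [hmain0])
  · -- s ≥ 1
    have hscast : (0:ℝ) < (s:ℝ) := by exact_mod_cast hspos
    have hsq : (0:ℝ) < Real.sqrt s := Real.sqrt_pos.mpr hscast
    set S := Finset.univ.filter (fun j => βstar j ≠ 0) with hSdef
    set Ts := ∑ j ∈ S, |η * (βhat j - βstar j)| with hTs
    set Tc := ∑ j ∈ Finset.univ.filter (fun j => ¬ βstar j ≠ 0),
      |η * (βhat j - βstar j)| with hTc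
    have hTsnn : 0 ≤ Ts := Finset.sum_nonneg fun j _ => abs_nonneg _
    have hTcnn : 0 ≤ Tc := Finset.sum_nonneg fun j _ => abs_nonneg _
    have hsplit : Ts + Tc = T1 := by
      rw [hTs, hTc, hT1def]; unfold l1
      exact Finset.sum_filter_add_sum_filter_not _ _ _
    -- Cauchy–Schwarz : Ts ≤ √s r
    have hTsB : Ts ≤ Real.sqrt s * r := by
      have h1 : Ts ^ 2 ≤ (S.card : ℝ) * ∑ j ∈ S, |η * (βhat j - βstar j)| ^ 2 :=
        sq_sum_le_card_mul_sum_sq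
      have h2 : ∑ j ∈ S, |η * (βhat j - βstar j)| ^ 2
          ≤ ∑ j, (η * (βhat j - βstar j)) ^ 2 := by
        have e0 : ∑ j ∈ S, |η * (βhat j - βstar j)| ^ 2
            = ∑ j ∈ S, (η * (βhat j - βstar j)) ^ 2 :=
          Finset.sum_congr rfl fun j _ => sq_abs _
        rw [e0]
        exact Finset.sum_le_sum_of_subset_of_nonneg (Finset.subset_univ S)
          fun j _ _ => sq_nonneg _
      have h3 : ∑ j, (η * (βhat j - βstar j)) ^ 2 = r ^ 2 := by
        have hnn2 : 0 ≤ ∑ j, (η * (βhat j - βstar j)) ^ 2 :=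
          Finset.sum_nonneg fun j _ => sq_nonneg _
        have : Real.sqrt (∑ j, (η * (βhat j - βstar j)) ^ 2) = r := hl2
        rw [← this, Real.sq_sqrt hnn2]
      have hcard : (S.card : ℝ) = (s:ℝ) := by rw [hSdef, hs]
      have h4 : Ts ^ 2 ≤ (Real.sqrt s * r) ^ 2 := by
        have hs2 : Real.sqrt s * Real.sqrt s = (s:ℝ) := Real.mul_self_sqrt hscast.le
        calc Ts ^ 2 ≤ (S.card : ℝ) * ∑ j ∈ S, |η * (βhat j - βstar j)| ^ 2 := h1
          _ ≤ (s:ℝ) * r ^ 2 := by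
              rw [hcard]
              exact mul_le_mul_of_nonneg_left (h2.trans h3.le) hscast.le
          _ = (Real.sqrt s * r) ^ 2 := by rw [mul_pow, Real.sq_sqrt hscast.le]
      calc Ts = Real.sqrt (Ts ^ 2) := (Real.sqrt_sq hTsnn).symm
        _ ≤ Real.sqrt ((Real.sqrt s * r) ^ 2) := Real.sqrt_le_sqrt h4
        _ = Real.sqrt s * r := Real.sqrt_sq (mul_nonneg hsq.le hr0.le)
    -- cone condition gives T1 ≤ 3 √s r
    have hconeB : lams * (Tc - Ts) ≤ ra2 * r + ra1 * T1 := by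
      have h5 : Tc - Ts ≤ l1 (fun j => βstar j + η * (βhat j - βstar j)) - l1 βstar := by
        have e2 : ∑ j ∈ Finset.univ.filter (fun j => ¬ βstar j ≠ 0),
            |βstar j + η * (βhat j - βstar j)| = Tc := by
          rw [hTc]
          refine Finset.sum_congr rfl fun j hj => ?_
          have : βstar j = 0 := by simpa using (Finset.mem_filter.mp hj).2
          rw [this]; ring_nf
        have e1 : ∑ j ∈ Finset.univ.filter (fun j => ¬ βstar j ≠ 0), |βstar j| = 0 := by
          refine Finset.sum_eq_zero fun j hj => ?_
          have : βstar j = 0 := by simpa using (Finset.mem_filter.mp hj).2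
          rw [this, abs_zero]
        have e3 : ∑ j ∈ S, |βstar j| - Ts ≤ ∑ j ∈ S, |βstar j + η * (βhat j - βstar j)| := by
          rw [hTs, ← Finset.sum_sub_distrib]
          refine Finset.sum_le_sum fun j _ => ?_
          have := abs_sub_abs_le_abs_sub (βstar j) (βstar j + η * (βhat j - βstar j))
          have e4 : |βstar j - (βstar j + η * (βhat j - βstar j))|
              = |η * (βhat j - βstar j)| := by rw [show βstar j - (βstar j + η * (βhat j - βstar j)) = -(η * (βhat j - βstar j)) from by ring, abs_neg]
          linarith
        have d1 : l1 (fun j => βstar j + η * (βhat j - βstar j))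
            = (∑ j ∈ S, |βstar j + η * (βhat j - βstar j)|)
              + ∑ j ∈ Finset.univ.filter (fun j => ¬ βstar j ≠ 0),
                |βstar j + η * (βhat j - βstar j)| := by
          unfold l1; rw [hSdef]; exact (Finset.sum_filter_add_sum_filter_not _ _ _).symm
        have d2 : l1 βstar = (∑ j ∈ S, |βstar j|)
            + ∑ j ∈ Finset.univ.filter (fun j => ¬ βstar j ≠ 0), |βstar j| := by
          unfold l1; rw [hSdef]; exact (Finset.sum_filter_add_sum_filter_not _ _ _).symm
        rw [d1, d2, e1, e2]; linarith
      have h5' := mul_le_mul_of_nonneg_left h5 hlams.le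
      linarith [hcone, habs1, h5']
    have hT1B : T1 ≤ 3 * Real.sqrt s * r := by
      rcases le_total T1 (3 * Real.sqrt s * r) with h | h
      · exact h
      · -- T1 ≥ 3√s r : derive the cone and conclude
        set Cs := ra2 / (3 * Real.sqrt s) + ra1 with hCsdef
        have hCs2' : lams + Cs ≤ 2 * (lams - Cs) := by
          have := (div_le_iff₀ hCs1).mp hCs2; linarith
        have hrT : ra2 * r ≤ Cs * T1 - ra1 * T1 := by
          rw [hCsdef]
          have h6 : ra2 * r ≤ ra2 * (T1 / (3 * Real.sqrt s)) := by
            apply mul_le_mul_of_nonneg_left _ hra2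
            rw [le_div_iff₀ (by positivity)]
            linarith [h]
          have h7 : ra2 * (T1 / (3 * Real.sqrt s)) = ra2 / (3 * Real.sqrt s) * T1 := by
            ring
          linarith [h6, h7]
        have h8 : lams * (Tc - Ts) ≤ Cs * (Ts + Tc) := by
          rw [hsplit]; linarith [hconeB, hrT]
        have h9 : (lams - Cs) * Tc ≤ (lams + Cs) * Ts := by linarith [h8]
        have h10 : Tc ≤ 2 * Ts := by
          have h11 : (lams - Cs) * Tc ≤ (lams - Cs) * (2 * Ts) := by
            linarith [h9, mul_nonneg (by linarith : (0:ℝ) ≤ 2 * (lams - Cs) - (lams + Cs)) hTsnn]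
          exact (mul_le_mul_iff_right₀ hCs1).mp h11
        calc T1 = Ts + Tc := hsplit.symm
          _ ≤ 3 * Ts := by linarith
          _ ≤ 3 * (Real.sqrt s * r) := by linarith [hTsB]
          _ = 3 * Real.sqrt s * r := by ring
    -- conclude
    have hfin : b1 * r ^ 2
        ≤ rb2 * r + rb1 + ra2 * r + (3 * (ra1 + lams) * Real.sqrt s) * r := by
      have h12 := mul_le_mul_of_nonneg_left hT1B (by linarith : (0:ℝ) ≤ ra1 + lams)
      linarith [hmain, h12]
    exact final_contra b1 r ra2 rb2 rb1 (Real.sqrt (b1 * rb1))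
      (3 * (ra1 + lams) * Real.sqrt s) hb1 hr0 hXr (by linarith) hfin


end RobustSparse
end
end

section
/- Suppose the truncated inlier covariates x̃_1,...,x̃_n ∈ ℝ^d satisfy sup_{M ∈ 𝔐_r} ((1/n) Σ_{i=1}^n ⟨x̃_i x̃_iᵀ, M⟩ − λ_*' ‖M‖₁) ≤ ‖Σ‖_op r². Then for every index set I_m ⊆ {1,...,n} with |I_m| = m, every u ∈ ℝ^n with ‖u‖_∞ ≤ c, and every v ∈ ℝ^d with ‖v‖₂ = r, one has |Σ_{i ∈ I_m} (1/n) u_i x̃_iᵀ v| ≤ c √(m/n) ‖Σ^{1/2}‖_op r + c √(m/n) √λ_*' ‖v‖₁. -/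
open MeasureTheory ProbabilityTheory Matrix Finset Real

noncomputable section

namespace RobustSparse

lemma vmv_psd {d : ℕ} (v : Fin d → ℝ) : (vecMulVec v v).PosSemidef := by
  refine Matrix.PosSemidef.of_dotProduct_mulVec_nonneg ?_ ?_
  · ext i j
    simp [Matrix.IsHermitian, vecMulVec_apply, Matrix.conjTranspose_apply, mul_comm]
  · intro x
    have : dotProduct (star x) ((vecMulVec v v) *ᵥ x) = (∑ j, v j * x j) ^ 2 := by
      simp only [dotProduct, Matrix.mulVec, vecMulVec_apply, star, Pi.star_apply, star_trivial]
      rw [sq, Finset.sum_mul_sum]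
      apply Finset.sum_congr rfl; intro i _
      rw [Finset.mul_sum]
      apply Finset.sum_congr rfl; intro j _
      ring
    rw [this]
    positivity

lemma minner_vmv {d : ℕ} (x v : Fin d → ℝ) :
    minner (vecMulVec x x) (vecMulVec v v) = (ip x v) ^ 2 := by
  simp only [minner, vecMulVec_apply, ip]
  rw [sq, Finset.sum_mul_sum]
  apply Finset.sum_congr rfl; intro i _
  apply Finset.sum_congr rfl; intro j _
  ring

lemma mat1_vmv {d : ℕ} (v : Fin d → ℝ) : mat1 (vecMulVec v v) = (l1 v) ^ 2 := by
  simp only [mat1, vecMulVec_apply, l1, abs_mul]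
  rw [sq, Finset.sum_mul_sum]

lemma trace_vmv {d : ℕ} (v : Fin d → ℝ) : (vecMulVec v v).trace = ∑ j, v j ^ 2 := by
  simp [Matrix.trace, Matrix.diag, vecMulVec_apply, sq]

set_option maxHeartbeats 1000000 in
/-- Proposition: control of partial sums of truncated inliers. -/
theorem statement5
    {d n : ℕ} (hn : 0 < n)
    (xt : Fin n → Fin d → ℝ)
    (Sig Ssq : Matrix (Fin d) (Fin d) ℝ) (hpsd : Ssq.PosSemidef) (hSig : Ssq * Ssq = Sig)
    (lam' c r : ℝ) (hlam' : 0 < lam') (hc : 0 < c)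
    (hsup : ∀ M ∈ Mr d r,
      (1 / n : ℝ) * ∑ i, minner (vecMulVec (xt i) (xt i)) M - lam' * mat1 M ≤
        opNorm Sig * r ^ 2)
    (m : ℕ) (Im : Finset (Fin n)) (hIm : Im.card = m)
    (u : Fin n → ℝ) (hu : ∀ i, |u i| ≤ c)
    (v : Fin d → ℝ) (hv : l2 v = r) :
    |∑ i ∈ Im, (1 / n : ℝ) * u i * ip (xt i) v| ≤
      c * Real.sqrt (m / n) * opNorm Ssq * r
        + c * Real.sqrt (m / n) * Real.sqrt lam' * l1 v := by
  have hr0 : 0 ≤ r := hv ▸ Real.sqrt_nonneg _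
  have hsum_sq : ∑ j, v j ^ 2 = r ^ 2 := by
    rw [← hv, l2, Real.sq_sqrt]
    positivity
  -- membership of v vᵀ in Mr
  have hM : vecMulVec v v ∈ Mr d r := by
    refine ⟨?_, vmv_psd v⟩
    rw [trace_vmv, hsum_sq]
  have hkey := hsup _ hM
  simp only [minner_vmv, mat1_vmv] at hkey
  set L : ℝ := l1 v with hL
  have hL0 : 0 ≤ L := Finset.sum_nonneg fun j _ => abs_nonneg _
  set A : ℝ := opNorm Sig with hA
  set B : ℝ := opNorm Ssq with hB
  have hA0 : 0 ≤ A := norm_nonneg _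
  have hB0 : 0 ≤ B := norm_nonneg _
  have hAB : A ≤ B ^ 2 := by
    rw [hA, hB, opNorm, opNorm, ← hSig, _root_.map_mul, sq]
    exact norm_mul_le _ _
  have hn' : (0:ℝ) < n := by exact_mod_cast hn
  -- full sum bound
  set T : ℝ := ∑ i ∈ Im, (ip (xt i) v) ^ 2 with hT
  have hT0 : 0 ≤ T := Finset.sum_nonneg fun i _ => sq_nonneg _
  have hTfull : T ≤ ∑ i, (ip (xt i) v) ^ 2 :=
    Finset.sum_le_sum_of_subset_of_nonneg (Finset.subset_univ Im)
      (fun i _ _ => sq_nonneg _)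
  have hTle : T ≤ n * (lam' * L ^ 2 + A * r ^ 2) := by
    have h1 : (1 / n : ℝ) * ∑ i, (ip (xt i) v) ^ 2 ≤ lam' * L ^ 2 + A * r ^ 2 := by
      linarith
    calc T ≤ ∑ i, (ip (xt i) v) ^ 2 := hTfull
      _ = n * ((1 / n : ℝ) * ∑ i, (ip (xt i) v) ^ 2) := by field_simp
      _ ≤ n * (lam' * L ^ 2 + A * r ^ 2) := by
          exact mul_le_mul_of_nonneg_left h1 (le_of_lt hn')
  -- Cauchy-Schwarz
  set S : ℝ := ∑ i ∈ Im, u i * ip (xt i) v with hS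
  have hCS : S ^ 2 ≤ (m * c ^ 2) * T := by
    have h1 := Finset.sum_mul_sq_le_sq_mul_sq Im u (fun i => ip (xt i) v)
    have h2 : ∑ i ∈ Im, u i ^ 2 ≤ m * c ^ 2 := by
      calc ∑ i ∈ Im, u i ^ 2 ≤ ∑ _i ∈ Im, c ^ 2 :=
            Finset.sum_le_sum fun i _ =>
              sq_le_sq' (neg_le_of_abs_le (hu i)) (le_of_abs_le (hu i))
        _ = m * c ^ 2 := by rw [Finset.sum_const, hIm]; ring
    calc S ^ 2 ≤ (∑ i ∈ Im, u i ^ 2) * T := h1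
      _ ≤ (m * c ^ 2) * T := mul_le_mul_of_nonneg_right h2 hT0
  have hS2 : S ^ 2 ≤ m * c ^ 2 * (n * (lam' * L ^ 2 + A * r ^ 2)) := by
    calc S ^ 2 ≤ (m * c ^ 2) * T := hCS
      _ ≤ m * c ^ 2 * (n * (lam' * L ^ 2 + A * r ^ 2)) := by
          apply mul_le_mul_of_nonneg_left hTle; positivity
  -- rewrite LHS
  have hLHS : ∑ i ∈ Im, (1 / n : ℝ) * u i * ip (xt i) v = (1 / n) * S := by
    rw [hS, Finset.mul_sum]; apply Finset.sum_congr rfl; intro i _; ring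
  rw [hLHS]
  set Q : ℝ := Real.sqrt (m / n) with hQ
  have hQ0 : 0 ≤ Q := Real.sqrt_nonneg _
  have hQ2 : Q ^ 2 = m / n := Real.sq_sqrt (by positivity)
  set P : ℝ := Real.sqrt lam' with hP
  have hP0 : 0 ≤ P := Real.sqrt_nonneg _
  have hP2 : P ^ 2 = lam' := Real.sq_sqrt (le_of_lt hlam')
  have hRHS0 : 0 ≤ c * Q * B * r + c * Q * P * L := by positivity
  have habs : |(1 / n : ℝ) * S| = Real.sqrt (((1/n) * S)^2) := by
    rw [Real.sqrt_sq_eq_abs]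
  rw [habs, ← Real.sqrt_sq hRHS0]
  apply Real.sqrt_le_sqrt
  have hsq : ((1/n : ℝ) * S)^2 = S^2 / n^2 := by ring
  rw [hsq]
  rw [div_le_iff₀ (by positivity)]
  have hmn : (m : ℝ) / n * n^2 = m * n := by field_simp
  have hexp : (c * Q * B * r + c * Q * P * L) ^ 2 * n^2
      = c^2 * (m/n) * (B*r + P*L)^2 * n^2 := by ring_nf; rw [hQ2]; ring
  rw [hexp]
  have : c^2 * ((m:ℝ)/n) * (B*r + P*L)^2 * n^2 = c^2 * ((m:ℝ)/n*n^2) * (B*r + P*L)^2 := by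
    ring
  rw [this, hmn]
  have h1 : A * r^2 ≤ B^2 * r^2 := mul_le_mul_of_nonneg_right hAB (sq_nonneg r)
  have h2 : 0 ≤ 2*(B*r)*(P*L) := by positivity
  have hexpand : (B*r+P*L)^2 = B^2*r^2 + 2*(B*r)*(P*L) + lam'*L^2 := by
    rw [← hP2]; ring
  have hkey2 : lam' * L^2 + A*r^2 ≤ (B*r+P*L)^2 := by linarith
  calc S^2 ≤ m*c^2*(n*(lam'*L^2+A*r^2)) := hS2
    _ ≤ m*c^2*(n*((B*r+P*L)^2)) := by
        apply mul_le_mul_of_nonneg_left (mul_le_mul_of_nonneg_left hkey2 hn'.le)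
        positivity
    _ = c^2*(m*n)*(B*r+P*L)^2 := by ring

end RobustSparse
end
end

section
/- Let β̂ be a minimizer of β ↦ Σ_{i=1}^n λ_o² H(n ŵ'_i (y_i − X̃_iᵀ β)/(λ_o √n)) + λ_s ‖β‖₁, let θ_η = (β̂ − β*) η for η ∈ (0,1), and write r_{v,i} = ŵ'_i n (y_i − X̃_iᵀ v)/(λ_o √n). Suppose that for every η ∈ (0,1), |λ_o √n Σ_{i=1}^n ŵ'_i h(r_{β*,i}) X̃_iᵀ θ_η| ≤ r_{a,2} ‖θ_η‖₂ + r_{a,1} ‖θ_η‖₁ with r_{a,1}, r_{a,2} ≥ 0, that λ_s − C_s > 0 and (λ_s + C_s)/(λ_s − C_s) ≤ 2 where C_s = r_{a,2}/√s + r_{a,1}, and that ‖θ_η‖₂ ≤ ‖θ_η‖₁/√s. Then ‖θ_{η,J^c}‖₁ ≤ ((λ_s + C_s)/(λ_s − C_s)) ‖θ_{η,J}‖₁ ≤ 2 ‖θ_{η,J}‖₁, where J is the support (index set of nonzero entries) of β* and θ_{η,J}, θ_{η,J^c} denote the restrictions of θ_η to J and its complement. -/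
open MeasureTheory ProbabilityTheory Matrix Finset Real

noncomputable section

namespace RobustSparse

lemma huber_tangent (a b : ℝ) : Huber b + hub b * (a - b) ≤ Huber a := by
  unfold Huber hub
  rcases le_or_gt |b| 1 with hb | hb
  · rw [if_pos hb, if_pos hb]
    rcases le_or_gt |a| 1 with ha | ha
    · rw [if_pos ha]; nlinarith [sq_nonneg (a - b)]
    · rw [if_neg (not_le.mpr ha)]
      have h1 : a * b ≤ |a| * |b| := by rw [← abs_mul]; exact le_abs_self _
      have h2 : |b| ^ 2 = b ^ 2 := sq_abs b
      nlinarith [abs_nonneg b, sq_nonneg (1 - |b|),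
        mul_nonneg (sub_nonneg.mpr hb) (sub_nonneg.mpr ha.le)]
  · rw [if_neg (not_le.mpr hb), if_neg (not_le.mpr hb)]
    have hb0 : b ≠ 0 := fun h => by simp [h] at hb; linarith
    rcases lt_or_gt_of_ne hb0 with hneg | hpos
    · rw [Real.sign_of_neg hneg, abs_of_neg hneg]
      rcases le_or_gt |a| 1 with ha | ha
      · rw [if_pos ha]; nlinarith [sq_nonneg (a + 1)]
      · rw [if_neg (not_le.mpr ha)]; nlinarith [neg_abs_le a]
    · rw [Real.sign_of_pos hpos, abs_of_pos hpos]
      rcases le_or_gt |a| 1 with ha | ha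
      · rw [if_pos ha]; nlinarith [sq_nonneg (a - 1)]
      · rw [if_neg (not_le.mpr ha)]; nlinarith [le_abs_self a]

lemma huber_convex (x y η : ℝ) (h0 : 0 ≤ η) (h1 : η ≤ 1) :
    Huber (η * x + (1 - η) * y) ≤ η * Huber x + (1 - η) * Huber y := by
  set m := η * x + (1 - η) * y with hm
  have hx := huber_tangent x m
  have hy := huber_tangent y m
  have key : η * (Huber m + hub m * (x - m)) + (1 - η) * (Huber m + hub m * (y - m))
      = Huber m := by rw [hm]; ring
  have h1' : (0:ℝ) ≤ 1 - η := by linarith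
  nlinarith [mul_le_mul_of_nonneg_left hx h0, mul_le_mul_of_nonneg_left hy h1']

/-- Proposition: cone condition for the penalized Huber estimator. -/
theorem statement8
    {d n s : ℕ} (hn : 0 < n)
    (y : Fin n → ℝ) (Xt : Fin n → Fin d → ℝ)
    (w' : Fin n → ℝ) (hw' : ∀ i, w' i = 0 ∨ w' i = 1 / n)
    (βstar : Fin d → ℝ) (hs : (Finset.univ.filter fun j => βstar j ≠ 0).card = s)
    (lamo lams : ℝ) (hlamo : 0 < lamo) (hlams : 0 < lams)
    (βhat : Fin d → ℝ)
    (hmin : ∀ β : Fin d → ℝ,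
      (∑ i, lamo ^ 2 * Huber (n * w' i * (y i - ip (Xt i) βhat) / (lamo * Real.sqrt n))
          + lams * l1 βhat)
        ≤ ∑ i, lamo ^ 2 * Huber (n * w' i * (y i - ip (Xt i) β) / (lamo * Real.sqrt n))
          + lams * l1 β)
    (ra1 ra2 : ℝ) (hra1 : 0 ≤ ra1) (hra2 : 0 ≤ ra2)
    (hgrad : ∀ η : ℝ, 0 < η → η < 1 →
      |lamo * Real.sqrt n * ∑ i, w' i *
          hub (w' i * n * (y i - ip (Xt i) βstar) / (lamo * Real.sqrt n))
          * ip (Xt i) (fun j => η * (βhat j - βstar j))|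
        ≤ ra2 * l2 (fun j => η * (βhat j - βstar j))
          + ra1 * l1 (fun j => η * (βhat j - βstar j)))
    (hCs1 : 0 < lams - (ra2 / Real.sqrt s + ra1))
    (hCs2 : (lams + (ra2 / Real.sqrt s + ra1)) / (lams - (ra2 / Real.sqrt s + ra1)) ≤ 2) :
    ∀ η : ℝ, 0 < η → η < 1 →
      l2 (fun j => η * (βhat j - βstar j))
        ≤ l1 (fun j => η * (βhat j - βstar j)) / Real.sqrt s →
      (∑ j ∈ Finset.univ.filter fun j => βstar j = 0, |η * (βhat j - βstar j)|)
          ≤ (lams + (ra2 / Real.sqrt s + ra1)) / (lams - (ra2 / Real.sqrt s + ra1))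
            * ∑ j ∈ Finset.univ.filter fun j => βstar j ≠ 0, |η * (βhat j - βstar j)|
        ∧ (lams + (ra2 / Real.sqrt s + ra1)) / (lams - (ra2 / Real.sqrt s + ra1))
            * (∑ j ∈ Finset.univ.filter fun j => βstar j ≠ 0, |η * (βhat j - βstar j)|)
          ≤ 2 * ∑ j ∈ Finset.univ.filter fun j => βstar j ≠ 0, |η * (βhat j - βstar j)| := by
  intro η hη0 hη1 hl2s
  have hg := hgrad η hη0 hη1
  have hn' : (0:ℝ) < n := Nat.cast_pos.mpr hn
  have hsq : Real.sqrt n * Real.sqrt n = (n:ℝ) := Real.mul_self_sqrt hn'.le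
  have hsqpos : 0 < Real.sqrt n := Real.sqrt_pos.mpr hn'
  set θ : Fin d → ℝ := fun j => η * (βhat j - βstar j) with hθ
  set βη : Fin d → ℝ := fun j => η * βhat j + (1 - η) * βstar j with hβη
  -- linearity of the inner product
  have hiplin : ∀ a : Fin d → ℝ, ip a βη = η * ip a βhat + (1 - η) * ip a βstar := by
    intro a
    simp only [ip, hβη, Finset.mul_sum, ← Finset.sum_add_distrib]
    exact Finset.sum_congr rfl fun j _ => by ring
  have hipθ : ∀ a : Fin d → ℝ, ip a θ = η * ip a βhat - η * ip a βstar := by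
    intro a
    simp only [ip, hθ, Finset.mul_sum, ← Finset.sum_sub_distrib]
    exact Finset.sum_congr rfl fun j _ => by ring
  -- Step A : value of objective at βη is at most value at βstar (convexity + minimality)
  have hA : (∑ i, lamo ^ 2 * Huber (n * w' i * (y i - ip (Xt i) βη) / (lamo * Real.sqrt n)))
        + lams * l1 βη
      ≤ (∑ i, lamo ^ 2 * Huber (n * w' i * (y i - ip (Xt i) βstar) / (lamo * Real.sqrt n)))
        + lams * l1 βstar := by
    have hsum : (∑ i, lamo ^ 2 * Huber (n * w' i * (y i - ip (Xt i) βη) / (lamo * Real.sqrt n)))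
        ≤ η * (∑ i, lamo ^ 2 * Huber (n * w' i * (y i - ip (Xt i) βhat) / (lamo * Real.sqrt n)))
          + (1 - η) * (∑ i, lamo ^ 2 *
              Huber (n * w' i * (y i - ip (Xt i) βstar) / (lamo * Real.sqrt n))) := by
      rw [Finset.mul_sum, Finset.mul_sum, ← Finset.sum_add_distrib]
      apply Finset.sum_le_sum
      intro i _
      have harg : (n:ℝ) * w' i * (y i - ip (Xt i) βη) / (lamo * Real.sqrt n)
          = η * ((n:ℝ) * w' i * (y i - ip (Xt i) βhat) / (lamo * Real.sqrt n))
            + (1 - η) * ((n:ℝ) * w' i * (y i - ip (Xt i) βstar) / (lamo * Real.sqrt n)) := by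
        rw [hiplin]; ring
      rw [harg]
      have hc := huber_convex
        ((n:ℝ) * w' i * (y i - ip (Xt i) βhat) / (lamo * Real.sqrt n))
        ((n:ℝ) * w' i * (y i - ip (Xt i) βstar) / (lamo * Real.sqrt n)) η hη0.le hη1.le
      nlinarith [mul_le_mul_of_nonneg_left hc (sq_nonneg lamo)]
    have hl1conv : l1 βη ≤ η * l1 βhat + (1 - η) * l1 βstar := by
      simp only [l1, hβη, Finset.mul_sum, ← Finset.sum_add_distrib]
      apply Finset.sum_le_sum
      intro j _
      calc |η * βhat j + (1 - η) * βstar j| ≤ |η * βhat j| + |(1 - η) * βstar j| := abs_add_le _ _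
        _ = η * |βhat j| + (1 - η) * |βstar j| := by
            rw [abs_mul, abs_mul, abs_of_nonneg hη0.le,
              abs_of_nonneg (by linarith : (0:ℝ) ≤ 1 - η)]
    have hmin' := hmin βstar
    nlinarith [mul_le_mul_of_nonneg_left hmin' hη0.le,
      mul_le_mul_of_nonneg_left hl1conv hlams.le]
  -- Step B : tangent line inequality for the Huber part
  have hipd : ∀ a : Fin d → ℝ, ip a βη = ip a βstar + ip a θ := by
    intro a; rw [hiplin, hipθ]; ring
  have heq : (∑ i, lamo ^ 2 *
        (hub ((n:ℝ) * w' i * (y i - ip (Xt i) βstar) / (lamo * Real.sqrt n))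
          * ((n:ℝ) * w' i * (y i - ip (Xt i) βη) / (lamo * Real.sqrt n)
            - (n:ℝ) * w' i * (y i - ip (Xt i) βstar) / (lamo * Real.sqrt n))))
      = -(lamo * Real.sqrt n * ∑ i, w' i *
          hub (w' i * n * (y i - ip (Xt i) βstar) / (lamo * Real.sqrt n))
          * ip (Xt i) θ) := by
    rw [Finset.mul_sum, ← Finset.sum_neg_distrib]
    apply Finset.sum_congr rfl
    intro i _
    have hcomm : (w' i * (n:ℝ) * (y i - ip (Xt i) βstar) / (lamo * Real.sqrt n))
        = ((n:ℝ) * w' i * (y i - ip (Xt i) βstar) / (lamo * Real.sqrt n)) := by ring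
    rw [hcomm, hipd]
    have hD : lamo * Real.sqrt n ≠ 0 := by positivity
    field_simp
    ring_nf
    rw [Real.sq_sqrt hn'.le]
    ring
  have hB : (∑ i, lamo ^ 2 * Huber (n * w' i * (y i - ip (Xt i) βstar) / (lamo * Real.sqrt n)))
        - (ra2 * l2 θ + ra1 * l1 θ)
      ≤ ∑ i, lamo ^ 2 * Huber (n * w' i * (y i - ip (Xt i) βη) / (lamo * Real.sqrt n)) := by
    have htan : ∀ i ∈ Finset.univ (α := Fin n),
        lamo ^ 2 * Huber ((n:ℝ) * w' i * (y i - ip (Xt i) βstar) / (lamo * Real.sqrt n))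
          + lamo ^ 2 * (hub ((n:ℝ) * w' i * (y i - ip (Xt i) βstar) / (lamo * Real.sqrt n))
            * ((n:ℝ) * w' i * (y i - ip (Xt i) βη) / (lamo * Real.sqrt n)
              - (n:ℝ) * w' i * (y i - ip (Xt i) βstar) / (lamo * Real.sqrt n)))
        ≤ lamo ^ 2 * Huber ((n:ℝ) * w' i * (y i - ip (Xt i) βη) / (lamo * Real.sqrt n)) := by
      intro i _
      have ht := huber_tangent
        ((n:ℝ) * w' i * (y i - ip (Xt i) βη) / (lamo * Real.sqrt n))
        ((n:ℝ) * w' i * (y i - ip (Xt i) βstar) / (lamo * Real.sqrt n))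
      nlinarith [mul_le_mul_of_nonneg_left ht (sq_nonneg lamo)]
    have hsum2 := Finset.sum_le_sum htan
    rw [Finset.sum_add_distrib, heq] at hsum2
    have habs := le_abs_self (lamo * Real.sqrt n * ∑ i, w' i *
          hub (w' i * n * (y i - ip (Xt i) βstar) / (lamo * Real.sqrt n))
          * ip (Xt i) θ)
    linarith
  -- combine the two steps
  have hkey : lams * l1 βη ≤ lams * l1 βstar + (ra2 * l2 θ + ra1 * l1 θ) := by linarith
  have hl2' := mul_le_mul_of_nonneg_left hl2s hra2
  have e2 : ra2 * (l1 θ / Real.sqrt s) = ra2 / Real.sqrt s * l1 θ := by ring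
  set Cs := ra2 / Real.sqrt s + ra1 with hCsdef
  have hCs0 : 0 ≤ Cs := add_nonneg (div_nonneg hra2 (Real.sqrt_nonneg _)) hra1
  have hkey2 : lams * l1 βη ≤ lams * l1 βstar + Cs * l1 θ := by
    rw [hCsdef]; linarith
  -- splitting sums over the support of βstar
  have hunion : ∀ f : Fin d → ℝ, (∑ j, f j)
      = (∑ j ∈ Finset.univ.filter fun j => βstar j = 0, f j)
        + ∑ j ∈ Finset.univ.filter fun j => βstar j ≠ 0, f j := by
    intro f
    rw [← Finset.sum_union]
    · apply Finset.sum_congr _ fun j _ => rfl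
      ext j
      by_cases h : βstar j = 0 <;> simp [h]
    · rw [Finset.disjoint_left]
      intro j hj1 hj2
      exact (Finset.mem_filter.mp hj2).2 (Finset.mem_filter.mp hj1).2
  set SJ := ∑ j ∈ Finset.univ.filter fun j => βstar j ≠ 0, |η * (βhat j - βstar j)| with hSJ
  set SJc := ∑ j ∈ Finset.univ.filter fun j => βstar j = 0, |η * (βhat j - βstar j)| with hSJc
  have hSJ0 : 0 ≤ SJ := Finset.sum_nonneg fun j _ => abs_nonneg _
  have hSJc0 : 0 ≤ SJc := Finset.sum_nonneg fun j _ => abs_nonneg _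
  have hsplit : l1 θ = SJc + SJ := by
    simp only [l1, hθ, hSJ, hSJc]
    exact hunion fun j => |η * (βhat j - βstar j)|
  -- decomposability of the l1 norm
  have hdecomp : SJc - SJ ≤ l1 βη - l1 βstar := by
    have h1 : l1 βη - l1 βstar = ∑ j, (|βη j| - |βstar j|) := by
      simp only [l1]; rw [← Finset.sum_sub_distrib]
    rw [h1, hunion fun j => |βη j| - |βstar j|]
    have hpart1 : (∑ j ∈ Finset.univ.filter fun j => βstar j = 0, (|βη j| - |βstar j|))
        = SJc := by
      rw [hSJc]
      apply Finset.sum_congr rfl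
      intro j hj
      have hj0 : βstar j = 0 := (Finset.mem_filter.mp hj).2
      simp only [hβη, hj0, mul_zero, add_zero, sub_zero, abs_zero]
    have hpart2 : -SJ ≤ ∑ j ∈ Finset.univ.filter fun j => βstar j ≠ 0, (|βη j| - |βstar j|) := by
      rw [hSJ, ← Finset.sum_neg_distrib]
      apply Finset.sum_le_sum
      intro j _
      have hsub := abs_sub_abs_le_abs_sub (βstar j) (βη j)
      have he : |βstar j - βη j| = |η * (βhat j - βstar j)| := by
        have hee : βstar j - βη j = -(η * (βhat j - βstar j)) := by
          simp only [hβη]; ring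
        rw [hee, abs_neg]
      rw [he] at hsub
      linarith
    linarith
  -- final algebra
  rw [hsplit] at hkey2
  have hfinal : lams * SJc - lams * SJ ≤ Cs * SJc + Cs * SJ := by
    have h1 : lams * (SJc - SJ) ≤ lams * (l1 βη - l1 βstar) :=
      mul_le_mul_of_nonneg_left hdecomp hlams.le
    linarith [hkey2, h1]
  have hcone : (lams - Cs) * SJc ≤ (lams + Cs) * SJ := by linarith [hfinal]
  constructor
  · rw [div_mul_eq_mul_div, le_div_iff₀ hCs1]
    linarith [hcone]
  · exact mul_le_mul_of_nonneg_right hCs2 hSJ0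

end RobustSparse
end
end

section
/- Assume the hypotheses of the cone proposition (gradient bound with constants r_{a,1}, r_{a,2} and the conditions on λ_s), and assume additionally that for every η ∈ (0,1), b₁ ‖θ_η‖₂² − r_{b,2} ‖θ_η‖₂ − r_{b,1} ≤ Σ_{i=1}^n λ_o √n ŵ'_i {−h(r_{β*+θ_η,i}) + h(r_{β*,i})} X̃_iᵀ θ_η, where b₁ > 0 and r_{b,1}, r_{b,2} ≥ 0, and that (r_{b,2} + C_{λ_s} + √(b₁ r_{b,1}))/b₁ < r with C_{λ_s} = r_{a,2} + 3(r_{a,1} + λ_s)√s. Then the minimizer β̂ of the weighted ℓ₁-penalized Huber objective satisfies ‖β̂ − β*‖₂ ≤ r. -/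
open MeasureTheory ProbabilityTheory Matrix Finset Real

noncomputable section

namespace RobustSparse

lemma hub_subgrad (a b : ℝ) : hub b * (a - b) ≤ Huber a - Huber b := by
  unfold hub Huber
  rcases le_or_gt |b| 1 with hb | hb
  · rcases le_or_gt |a| 1 with ha | ha
    · simp only [if_pos ha, if_pos hb]
      nlinarith [sq_nonneg (a - b)]
    · simp only [if_pos hb, if_neg (not_le.2 ha)]
      have h1 : a * b ≤ |a| * |b| := by
        calc a * b ≤ |a * b| := le_abs_self _
        _ = |a| * |b| := abs_mul a b
      have h2 : |b| ^ 2 = b ^ 2 := sq_abs b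
      nlinarith [mul_nonneg (sub_nonneg.2 hb) (sub_nonneg.2 ha.le), sq_nonneg (1 - |b|)]
  · have hb0 : b ≠ 0 := by intro h; rw [h, abs_zero] at hb; linarith
    simp only [if_neg (not_le.2 hb)]
    rcases lt_or_gt_of_ne hb0 with hneg | hpos
    · rw [Real.sign_of_neg hneg, abs_of_neg hneg]
      rcases le_or_gt |a| 1 with ha | ha
      · simp only [if_pos ha]; nlinarith [sq_nonneg (a + 1)]
      · simp only [if_neg (not_le.2 ha)]
        have := neg_abs_le a; linarith
    · rw [Real.sign_of_pos hpos, abs_of_pos hpos]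
      rcases le_or_gt |a| 1 with ha | ha
      · simp only [if_pos ha]; nlinarith [sq_nonneg (a - 1)]
      · simp only [if_neg (not_le.2 ha)]
        have := le_abs_self a; linarith

lemma ip_smul {d : ℕ} (x a : Fin d → ℝ) (c : ℝ) : ip x (fun j => c * a j) = c * ip x a := by
  unfold ip; rw [Finset.mul_sum]; exact Finset.sum_congr rfl fun j _ => by ring

lemma ip_addf {d : ℕ} (x a b : Fin d → ℝ) : ip x (fun j => a j + b j) = ip x a + ip x b := by
  unfold ip; rw [← Finset.sum_add_distrib]; exact Finset.sum_congr rfl fun j _ => by ring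

lemma ip_decomp {d : ℕ} (x a b : Fin d → ℝ) : ip x b = ip x a + ip x (fun j => b j - a j) := by
  unfold ip; rw [← Finset.sum_add_distrib]; exact Finset.sum_congr rfl fun j _ => by ring

lemma l2_nonneg {d : ℕ} (v : Fin d → ℝ) : 0 ≤ l2 v := Real.sqrt_nonneg _

lemma l2_smul {d : ℕ} (c : ℝ) (hc : 0 ≤ c) (v : Fin d → ℝ) :
    l2 (fun j => c * v j) = c * l2 v := by
  unfold l2
  have he : ∑ j, (c * v j) ^ 2 = c ^ 2 * ∑ j, v j ^ 2 := by
    rw [Finset.mul_sum]; exact Finset.sum_congr rfl fun j _ => by ring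
  rw [he, Real.sqrt_mul (sq_nonneg c), Real.sqrt_sq hc]

lemma sum_abs_le_sqrt_card_mul_l2 {d : ℕ} (S : Finset (Fin d)) (v : Fin d → ℝ) :
    ∑ j ∈ S, |v j| ≤ Real.sqrt S.card * l2 v := by
  have h0 : 0 ≤ ∑ j ∈ S, |v j| := Finset.sum_nonneg fun j _ => abs_nonneg _
  have h1 : (∑ j ∈ S, |v j|) ^ 2 ≤ (S.card : ℝ) * ∑ j, v j ^ 2 := by
    have hcs := Finset.sum_mul_sq_le_sq_mul_sq S (fun _ => (1 : ℝ)) (fun j => |v j|)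
    simp only [one_mul, one_pow, Finset.sum_const, nsmul_eq_mul, mul_one] at hcs
    have h2 : ∑ j ∈ S, |v j| ^ 2 ≤ ∑ j, v j ^ 2 := by
      have : ∑ j ∈ S, |v j| ^ 2 = ∑ j ∈ S, v j ^ 2 :=
        Finset.sum_congr rfl fun j _ => sq_abs _
      rw [this]
      exact Finset.sum_le_sum_of_subset_of_nonneg (Finset.subset_univ S)
        (fun j _ _ => sq_nonneg _)
    calc (∑ j ∈ S, |v j|) ^ 2 ≤ (S.card : ℝ) * ∑ j ∈ S, |v j| ^ 2 := hcs
    _ ≤ (S.card : ℝ) * ∑ j, v j ^ 2 := by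
        exact mul_le_mul_of_nonneg_left h2 (Nat.cast_nonneg _)
  calc ∑ j ∈ S, |v j| = Real.sqrt ((∑ j ∈ S, |v j|) ^ 2) := (Real.sqrt_sq h0).symm
  _ ≤ Real.sqrt ((S.card : ℝ) * ∑ j, v j ^ 2) := Real.sqrt_le_sqrt h1
  _ = Real.sqrt S.card * l2 v := Real.sqrt_mul (Nat.cast_nonneg _) _

lemma quad_bound {b1 C rb1 t : ℝ} (hb1 : 0 < b1) (hC : 0 ≤ C) (hrb1 : 0 ≤ rb1) (ht : 0 ≤ t)
    (h : b1 * t ^ 2 ≤ C * t + rb1) : t ≤ (C + Real.sqrt (b1 * rb1)) / b1 := by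
  set q := Real.sqrt (b1 * rb1) with hq
  have hq0 : 0 ≤ q := Real.sqrt_nonneg _
  have hq2 : q ^ 2 = b1 * rb1 := Real.sq_sqrt (by positivity)
  by_contra hcon
  push_neg at hcon
  rw [div_lt_iff₀ hb1] at hcon
  have h1 : 0 < b1 * t - (C + q) := by linarith [hcon]
  have h2 : 0 < b1 * t + q := by nlinarith
  nlinarith [mul_pos h1 h2, mul_nonneg hC hq0]


set_option maxHeartbeats 1600000

/-- Proposition: deterministic ℓ2 error bound given the cone
hypotheses and the strong-convexity lower bound. -/
theorem statement10
    {d n s : ℕ} (hn : 0 < n)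
    (y : Fin n → ℝ) (Xt : Fin n → Fin d → ℝ)
    (w' : Fin n → ℝ) (hw' : ∀ i, w' i = 0 ∨ w' i = 1 / n)
    (βstar : Fin d → ℝ) (hs : (Finset.univ.filter fun j => βstar j ≠ 0).card = s)
    (lamo lams : ℝ) (hlamo : 0 < lamo) (hlams : 0 < lams)
    (βhat : Fin d → ℝ)
    (hmin : ∀ β : Fin d → ℝ,
      (∑ i, lamo ^ 2 * Huber (n * w' i * (y i - ip (Xt i) βhat) / (lamo * Real.sqrt n))
          + lams * l1 βhat)
        ≤ ∑ i, lamo ^ 2 * Huber (n * w' i * (y i - ip (Xt i) β) / (lamo * Real.sqrt n))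
          + lams * l1 β)
    (ra1 ra2 : ℝ) (hra1 : 0 ≤ ra1) (hra2 : 0 ≤ ra2)
    (hgrad : ∀ η : ℝ, 0 < η → η < 1 →
      |lamo * Real.sqrt n * ∑ i, w' i *
          hub (w' i * n * (y i - ip (Xt i) βstar) / (lamo * Real.sqrt n))
          * ip (Xt i) (fun j => η * (βhat j - βstar j))|
        ≤ ra2 * l2 (fun j => η * (βhat j - βstar j))
          + ra1 * l1 (fun j => η * (βhat j - βstar j)))
    (hCs1 : 0 < lams - (ra2 / Real.sqrt s + ra1))
    (hCs2 : (lams + (ra2 / Real.sqrt s + ra1)) / (lams - (ra2 / Real.sqrt s + ra1)) ≤ 2)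
    (b1 rb1 rb2 : ℝ) (hb1 : 0 < b1) (hrb1 : 0 ≤ rb1) (hrb2 : 0 ≤ rb2)
    (hlower : ∀ η : ℝ, 0 < η → η < 1 →
      b1 * l2 (fun j => η * (βhat j - βstar j)) ^ 2
          - rb2 * l2 (fun j => η * (βhat j - βstar j)) - rb1
        ≤ ∑ i, lamo * Real.sqrt n * w' i *
            (- hub (w' i * n *
                (y i - ip (Xt i) (fun j => βstar j + η * (βhat j - βstar j)))
                  / (lamo * Real.sqrt n))
              + hub (w' i * n * (y i - ip (Xt i) βstar) / (lamo * Real.sqrt n)))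
            * ip (Xt i) (fun j => η * (βhat j - βstar j)))
    (r : ℝ)
    (hrlow : (rb2 + (ra2 + 3 * (ra1 + lams) * Real.sqrt s) + Real.sqrt (b1 * rb1)) / b1 < r) :
    l2 (fun j => βhat j - βstar j) ≤ r := by
  classical
  set S : Finset (Fin d) := Finset.univ.filter (fun j => βstar j ≠ 0) with hSdef
  set Sc : Finset (Fin d) := Finset.univ.filter (fun j => ¬ βstar j ≠ 0) with hScdef
  have hsplit : ∀ g : Fin d → ℝ, (∑ j ∈ S, g j) + ∑ j ∈ Sc, g j = ∑ j, g j :=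
    fun g => Finset.sum_filter_add_sum_filter_not _ _ g
  have hn' : (0:ℝ) < n := by exact_mod_cast hn
  have hsn : (0:ℝ) < Real.sqrt n := Real.sqrt_pos.2 hn'
  have hnn : Real.sqrt n * Real.sqrt n = (n:ℝ) := Real.mul_self_sqrt hn'.le
  have hsqs : (0:ℝ) ≤ Real.sqrt s := Real.sqrt_nonneg _
  have hra1lams : ra1 < lams := by
    have h0 : 0 ≤ ra2 / Real.sqrt s := div_nonneg hra2 hsqs
    linarith
  have h3s : 0 ≤ 3 * (ra1 + lams) * Real.sqrt s :=
    mul_nonneg (mul_nonneg (by norm_num) (by linarith)) hsqs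
  have hq0 : 0 ≤ Real.sqrt (b1 * rb1) := Real.sqrt_nonneg _
  set C : ℝ := rb2 + (ra2 + 3 * (ra1 + lams) * Real.sqrt s) with hCdef
  have hC0 : 0 ≤ C := by rw [hCdef]; linarith
  have hr0 : 0 < r := lt_of_le_of_lt (div_nonneg (by linarith) hb1.le) hrlow
  set R : ℝ := (C + Real.sqrt (b1 * rb1)) / b1 with hRdef
  have hRr : R < r := hrlow
  have key : ∀ η : ℝ, 0 < η → η < 1 → η * l2 (fun j => βhat j - βstar j) ≤ R := by
    intro η hη0 hη1
    have h1η : 0 < 1 - η := by linarith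
    obtain ⟨θ, hθ⟩ : ∃ θ : Fin d → ℝ, θ = fun j => βhat j - βstar j := ⟨_, rfl⟩
    obtain ⟨V, hV⟩ : ∃ V : Fin d → ℝ, V = fun j => η * θ j := ⟨_, rfl⟩
    obtain ⟨W, hW⟩ : ∃ W : Fin d → ℝ, W = fun j => βstar j + η * θ j := ⟨_, rfl⟩
    obtain ⟨u, hu⟩ : ∃ u : Fin n → ℝ, u = fun i => ip (Xt i) θ := ⟨_, rfl⟩
    obtain ⟨A, hA⟩ : ∃ A : Fin n → ℝ,
        A = fun i => w' i * n * (y i - ip (Xt i) βstar) / (lamo * Real.sqrt n) := ⟨_, rfl⟩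
    obtain ⟨B, hB⟩ : ∃ B : Fin n → ℝ,
        B = fun i => w' i * n * (y i - ip (Xt i) W) / (lamo * Real.sqrt n) := ⟨_, rfl⟩
    have hVeq : (fun j => η * (βhat j - βstar j)) = V := by rw [hV, hθ]
    have hWeq : (fun j => βstar j + η * (βhat j - βstar j)) = W := by rw [hW, hθ]
    have hAfold : ∀ i, w' i * (n:ℝ) * (y i - ip (Xt i) βstar) / (lamo * Real.sqrt n) = A i := by
      intro i; rw [hA]
    have hBfold : ∀ i, w' i * (n:ℝ) * (y i - ip (Xt i) W) / (lamo * Real.sqrt n) = B i := by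
      intro i; rw [hB]
    have hl2V : l2 V = η * l2 θ := by
      rw [hV]; exact l2_smul η hη0.le θ
    have hipV : ∀ i, ip (Xt i) V = η * u i := by
      intro i; rw [hV, hu]; exact ip_smul (Xt i) θ η
    have hBval : ∀ i, B i = A i - η * (w' i * n * u i / (lamo * Real.sqrt n)) := by
      intro i
      simp only [hB, hA, hu, hW]
      rw [ip_addf (Xt i) βstar (fun j => η * θ j), ip_smul (Xt i) θ η]
      ring
    have hBhval : ∀ i, (n:ℝ) * w' i * (y i - ip (Xt i) βhat) / (lamo * Real.sqrt n)
        = A i - w' i * n * u i / (lamo * Real.sqrt n) := by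
      intro i
      simp only [hA, hu, hθ]
      rw [ip_decomp (Xt i) βstar βhat]
      ring
    have ediv : ∀ i, w' i * (n:ℝ) * u i / (lamo * Real.sqrt n)
        = Real.sqrt n * w' i * u i / lamo := by
      intro i
      rw [div_eq_div_iff (by positivity) hlamo.ne']
      linear_combination (-(w' i * u i * lamo)) * hnn
    -- Step 1: pointwise subgradient inequality, scaled
    have step1 : ∀ i, -((1 - η) * (lamo * Real.sqrt n * w' i * hub (B i) * u i))
        ≤ lamo ^ 2 * Huber (A i - w' i * n * u i / (lamo * Real.sqrt n))
          - lamo ^ 2 * Huber (B i) := by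
      intro i
      have h := hub_subgrad (A i - w' i * n * u i / (lamo * Real.sqrt n)) (B i)
      have hdiff : A i - w' i * n * u i / (lamo * Real.sqrt n) - B i
          = -((1 - η) * (Real.sqrt n * w' i * u i / lamo)) := by
        rw [hBval i, ediv i]; ring
      rw [hdiff] at h
      have h2 := mul_le_mul_of_nonneg_left h (sq_nonneg lamo)
      have heq : lamo ^ 2 * (hub (B i) * -((1 - η) * (Real.sqrt n * w' i * u i / lamo)))
          = -((1 - η) * (lamo * Real.sqrt n * w' i * hub (B i) * u i)) := by
        field_simp
      calc -((1 - η) * (lamo * Real.sqrt n * w' i * hub (B i) * u i))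
          = lamo ^ 2 * (hub (B i) * -((1 - η) * (Real.sqrt n * w' i * u i / lamo))) := heq.symm
        _ ≤ lamo ^ 2 * (Huber (A i - w' i * n * u i / (lamo * Real.sqrt n)) - Huber (B i)) := h2
        _ = lamo ^ 2 * Huber (A i - w' i * n * u i / (lamo * Real.sqrt n))
            - lamo ^ 2 * Huber (B i) := by ring
    have sum1 : -((1 - η) * ∑ i, lamo * Real.sqrt n * w' i * hub (B i) * u i)
        ≤ (∑ i, lamo ^ 2 * Huber (A i - w' i * n * u i / (lamo * Real.sqrt n)))
          - ∑ i, lamo ^ 2 * Huber (B i) := by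
      have h := Finset.sum_le_sum (fun i (_ : i ∈ Finset.univ) => step1 i)
      rw [Finset.sum_sub_distrib] at h
      calc -((1 - η) * ∑ i, lamo * Real.sqrt n * w' i * hub (B i) * u i)
          = ∑ i, -((1 - η) * (lamo * Real.sqrt n * w' i * hub (B i) * u i)) := by
            rw [Finset.sum_neg_distrib, ← Finset.mul_sum]
        _ ≤ _ := h
    -- Step 2: minimality of βhat
    have step2 : (∑ i, lamo ^ 2 * Huber (A i - w' i * n * u i / (lamo * Real.sqrt n)))
        - (∑ i, lamo ^ 2 * Huber (B i))
        ≤ lams * (l1 W - l1 βhat) := by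
      have h := hmin W
      have e2 : ∀ i, (n:ℝ) * w' i * (y i - ip (Xt i) W) / (lamo * Real.sqrt n) = B i := by
        intro i; simp only [hB]; ring
      simp only [hBhval, e2] at h
      linarith
    -- Step 3: l1 decomposition
    have step3 : l1 W - l1 βhat
        ≤ (1 - η) * ((∑ j ∈ S, |θ j|) - ∑ j ∈ Sc, |θ j|) := by
      have hgoal : l1 W - l1 βhat
          = ((∑ j ∈ S, |W j|) - ∑ j ∈ S, |βhat j|)
            + ((∑ j ∈ Sc, |W j|) - ∑ j ∈ Sc, |βhat j|) := by
        unfold l1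
        rw [← hsplit (fun j => |W j|), ← hsplit (fun j => |βhat j|)]
        ring
      have hWj : ∀ j, W j = βstar j + η * θ j := by intro j; rw [hW]
      have hS1 : (∑ j ∈ S, |W j|) - ∑ j ∈ S, |βhat j|
          ≤ (1 - η) * ∑ j ∈ S, |θ j| := by
        rw [Finset.mul_sum, ← Finset.sum_sub_distrib]
        refine Finset.sum_le_sum fun j _ => ?_
        have h1 := abs_sub_abs_le_abs_sub (W j) (βhat j)
        have he : W j - βhat j = -((1 - η) * θ j) := by
          rw [hWj j, hθ]; ring
        calc |W j| - |βhat j| ≤ |W j - βhat j| := h1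
          _ = (1 - η) * |θ j| := by
            rw [he, abs_neg, abs_mul, abs_of_pos h1η]
      have hS2 : (∑ j ∈ Sc, |W j|) - ∑ j ∈ Sc, |βhat j|
          = -((1 - η) * ∑ j ∈ Sc, |θ j|) := by
        rw [Finset.mul_sum, ← Finset.sum_sub_distrib, ← Finset.sum_neg_distrib]
        refine Finset.sum_congr rfl fun j hj => ?_
        have hj0 : βstar j = 0 := by
          rw [hScdef] at hj
          simpa using (Finset.mem_filter.1 hj).2
        have hbj : βhat j = θ j := by simp only [hθ]; rw [hj0]; ring
        rw [hWj j, hj0, hbj, zero_add, abs_mul, abs_of_pos hη0]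
        ring
      rw [hgoal, hS2]
      calc ((∑ j ∈ S, |W j|) - ∑ j ∈ S, |βhat j|)
            + -((1 - η) * ∑ j ∈ Sc, |θ j|)
          ≤ (1 - η) * (∑ j ∈ S, |θ j|) + -((1 - η) * ∑ j ∈ Sc, |θ j|) := by linarith [hS1]
        _ = (1 - η) * ((∑ j ∈ S, |θ j|) - ∑ j ∈ Sc, |θ j|) := by ring
    -- Step 4: divide by (1 - η)
    have step4 : -(∑ i, lamo * Real.sqrt n * w' i * hub (B i) * u i)
        ≤ lams * ((∑ j ∈ S, |θ j|) - ∑ j ∈ Sc, |θ j|) := by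
      have h5 : (1 - η) * (-(∑ i, lamo * Real.sqrt n * w' i * hub (B i) * u i))
          ≤ (1 - η) * (lams * ((∑ j ∈ S, |θ j|) - ∑ j ∈ Sc, |θ j|)) := by
        have hA3 := mul_le_mul_of_nonneg_left step3 hlams.le
        calc (1 - η) * (-(∑ i, lamo * Real.sqrt n * w' i * hub (B i) * u i))
            = -((1 - η) * ∑ i, lamo * Real.sqrt n * w' i * hub (B i) * u i) := by ring
          _ ≤ (∑ i, lamo ^ 2 * Huber (A i - w' i * n * u i / (lamo * Real.sqrt n)))
              - ∑ i, lamo ^ 2 * Huber (B i) := sum1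
          _ ≤ lams * (l1 W - l1 βhat) := step2
          _ ≤ lams * ((1 - η) * ((∑ j ∈ S, |θ j|) - ∑ j ∈ Sc, |θ j|)) := hA3
          _ = (1 - η) * (lams * ((∑ j ∈ S, |θ j|) - ∑ j ∈ Sc, |θ j|)) := by ring
      exact le_of_mul_le_mul_left h5 h1η
    -- gradient bound
    have hgrad' : lamo * Real.sqrt n * ∑ i, w' i * hub (A i) * ip (Xt i) V
        ≤ ra2 * l2 V + ra1 * l1 V := by
      have h := hgrad η hη0 hη1
      rw [hVeq] at h
      simp only [hAfold] at h
      exact le_trans (le_abs_self _) h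
    have Hlow : b1 * l2 V ^ 2 - rb2 * l2 V - rb1
        ≤ ∑ i, lamo * Real.sqrt n * w' i * (-hub (B i) + hub (A i)) * ip (Xt i) V := by
      have h := hlower η hη0 hη1
      rw [hVeq, hWeq] at h
      simp only [hAfold, hBfold] at h
      exact h
    have hDsplit : (∑ i, lamo * Real.sqrt n * w' i * (-hub (B i) + hub (A i)) * ip (Xt i) V)
        = η * (-(∑ i, lamo * Real.sqrt n * w' i * hub (B i) * u i))
          + lamo * Real.sqrt n * ∑ i, w' i * hub (A i) * ip (Xt i) V := by
      have hterm : ∀ i, lamo * Real.sqrt n * w' i * (-hub (B i) + hub (A i)) * ip (Xt i) V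
          = η * -(lamo * Real.sqrt n * w' i * hub (B i) * u i)
            + lamo * Real.sqrt n * (w' i * hub (A i) * ip (Xt i) V) := by
        intro i; rw [hipV i]; ring
      calc (∑ i, lamo * Real.sqrt n * w' i * (-hub (B i) + hub (A i)) * ip (Xt i) V)
          = ∑ i, (η * -(lamo * Real.sqrt n * w' i * hub (B i) * u i)
              + lamo * Real.sqrt n * (w' i * hub (A i) * ip (Xt i) V)) :=
            Finset.sum_congr rfl fun i _ => hterm i
        _ = _ := by
            rw [Finset.sum_add_distrib, ← Finset.mul_sum, ← Finset.mul_sum,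
              Finset.sum_neg_distrib]
    -- combine into quadratic
    have hP : ∑ j ∈ S, |θ j| ≤ Real.sqrt s * l2 θ := by
      have h := sum_abs_le_sqrt_card_mul_l2 S θ
      rwa [hs] at h
    have hQ0 : 0 ≤ ∑ j ∈ Sc, |θ j| := Finset.sum_nonneg fun j _ => abs_nonneg _
    have hl2V0 : 0 ≤ l2 V := l2_nonneg V
    have hl1V : l1 V = η * (∑ j ∈ S, |θ j|) + η * ∑ j ∈ Sc, |θ j| := by
      have habs : ∀ j, |V j| = η * |θ j| := by
        intro j; rw [hV]; exact (abs_mul η (θ j)).trans (by rw [abs_of_pos hη0])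
      unfold l1
      rw [← hsplit (fun j => |V j|)]
      rw [Finset.sum_congr rfl fun j _ => habs j,
        Finset.sum_congr rfl (fun j (_ : j ∈ Sc) => habs j), ← Finset.mul_sum, ← Finset.mul_sum]
    have c1 : η * (-(∑ i, lamo * Real.sqrt n * w' i * hub (B i) * u i))
        ≤ η * (lams * ((∑ j ∈ S, |θ j|) - ∑ j ∈ Sc, |θ j|)) :=
      mul_le_mul_of_nonneg_left step4 hη0.le
    have c2 : b1 * l2 V ^ 2 - rb2 * l2 V - rb1
        ≤ η * (lams * ((∑ j ∈ S, |θ j|) - ∑ j ∈ Sc, |θ j|)) + (ra2 * l2 V + ra1 * l1 V) := by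
      calc b1 * l2 V ^ 2 - rb2 * l2 V - rb1
          ≤ ∑ i, lamo * Real.sqrt n * w' i * (-hub (B i) + hub (A i)) * ip (Xt i) V := Hlow
        _ = η * (-(∑ i, lamo * Real.sqrt n * w' i * hub (B i) * u i))
            + lamo * Real.sqrt n * ∑ i, w' i * hub (A i) * ip (Xt i) V := hDsplit
        _ ≤ η * (lams * ((∑ j ∈ S, |θ j|) - ∑ j ∈ Sc, |θ j|))
            + (ra2 * l2 V + ra1 * l1 V) := add_le_add c1 hgrad'
    rw [hl1V] at c2
    have c3 : η * ∑ j ∈ S, |θ j| ≤ Real.sqrt s * l2 V := by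
      rw [hl2V]
      calc η * ∑ j ∈ S, |θ j| ≤ η * (Real.sqrt s * l2 θ) :=
          mul_le_mul_of_nonneg_left hP hη0.le
        _ = Real.sqrt s * (η * l2 θ) := by ring
    have c5 : (lams + ra1) * (η * ∑ j ∈ S, |θ j|) ≤ (lams + ra1) * (Real.sqrt s * l2 V) :=
      mul_le_mul_of_nonneg_left c3 (by linarith)
    have c6 : ra1 * (η * ∑ j ∈ Sc, |θ j|) ≤ lams * (η * ∑ j ∈ Sc, |θ j|) :=
      mul_le_mul_of_nonneg_right hra1lams.le (mul_nonneg hη0.le hQ0)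
    have c7 : 0 ≤ (ra1 + lams) * Real.sqrt s * l2 V :=
      mul_nonneg (mul_nonneg (by linarith) hsqs) hl2V0
    have hfin : b1 * l2 V ^ 2 ≤ C * l2 V + rb1 := by
      rw [hCdef]; nlinarith [c2, c5, c6, c7]
    have hres := quad_bound hb1 hC0 hrb1 hl2V0 hfin
    rw [← hRdef] at hres
    rw [hl2V] at hres
    rw [show (fun j => βhat j - βstar j) = θ from hθ.symm]
    exact hres
  by_contra hcon
  push_neg at hcon
  have hL : 0 < l2 (fun j => βhat j - βstar j) := lt_trans hr0 hcon
  have hη0 : 0 < (r + l2 (fun j => βhat j - βstar j)) / (2 * l2 (fun j => βhat j - βstar j)) := by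
    positivity
  have hη1 : (r + l2 (fun j => βhat j - βstar j)) / (2 * l2 (fun j => βhat j - βstar j)) < 1 := by
    rw [div_lt_one (by linarith)]
    linarith
  have hk := key _ hη0 hη1
  have heq : (r + l2 (fun j => βhat j - βstar j)) / (2 * l2 (fun j => βhat j - βstar j))
      * l2 (fun j => βhat j - βstar j) = (r + l2 (fun j => βhat j - βstar j)) / 2 := by
    field_simp
  rw [heq] at hk
  linarith

end RobustSparse
end
end

section
/- Let x be a random vector in ℝ^d with σ_{x,4}^4 = max_j E[x_j^4] finite, and let x̃ be its coordinatewise truncation at level τ_x > 0. Then for all coordinates 1 ≤ j₁, j₂ ≤ d, E[x̃_{j₁} x̃_{j₂}] − E[x_{j₁} x_{j₂}] ≤ 2 σ_{x,4}^4 / τ_x²; in particular the entrywise maximum norm of E[x̃ x̃ᵀ] − E[x xᵀ] is at most 2 σ_{x,4}^4 / τ_x². -/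
open MeasureTheory ProbabilityTheory Matrix Finset Real

noncomputable section

namespace RobustSparse

/-- the truncation is a clamp. -/
lemma trunc_eq_clamp {τ : ℝ} (hτ : 0 ≤ τ) (a : ℝ) :
    Real.sign a * min |a| τ = max (-τ) (min a τ) := by
  rcases lt_trichotomy a 0 with h | h | h
  · rw [Real.sign_of_neg h, abs_of_neg h]
    rcases le_total (-a) τ with h1 | h1
    · rw [min_eq_left h1, min_eq_left (by linarith), max_eq_right (by linarith)]; ring
    · rw [min_eq_right h1, min_eq_left (by linarith), max_eq_left (by linarith)]; ring
  · simp [h, Real.sign_zero, le_max_iff, hτ]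
  · rw [Real.sign_of_pos h, abs_of_pos h, one_mul,
      max_eq_right (le_trans (by linarith) (le_min (le_of_lt h) hτ))]

lemma abs_clamp_le_tau {τ : ℝ} (hτ : 0 ≤ τ) (a : ℝ) : |max (-τ) (min a τ)| ≤ τ := by
  rw [abs_le]
  constructor
  · exact le_max_left _ _
  · exact max_le (by linarith) (min_le_right _ _)

lemma abs_clamp_le_abs {τ : ℝ} (hτ : 0 ≤ τ) (a : ℝ) : |max (-τ) (min a τ)| ≤ |a| := by
  rcases le_total a 0 with h | h
  · rw [min_eq_left (le_trans h hτ), abs_of_nonpos h, abs_le]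
    constructor
    · rw [neg_neg]; exact le_max_right _ _
    · exact max_le (by linarith) (by linarith)
  · have h0 : 0 ≤ min a τ := le_min h hτ
    rw [max_eq_right (by linarith), abs_of_nonneg h0, abs_of_nonneg h]
    exact min_le_left _ _

lemma clamp_eq_self {τ a : ℝ} (h : |a| ≤ τ) : max (-τ) (min a τ) = a := by
  rw [abs_le] at h
  rw [min_eq_left h.2, max_eq_right h.1]

lemma abs_clamp_sub {τ a : ℝ} (hτ : 0 < τ) (h : τ < |a|) :
    |max (-τ) (min a τ) - a| = |a| - τ := by
  rcases le_total a 0 with h0 | h0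
  · rw [abs_of_nonpos h0] at h ⊢
    rw [min_eq_left (by linarith), max_eq_left (by linarith), abs_of_nonneg (by linarith)]
    ring
  · rw [abs_of_nonneg h0] at h ⊢
    rw [min_eq_right (by linarith), max_eq_right (by linarith), abs_of_nonpos (by linarith)]
    ring

/-- key pointwise bound. -/
lemma clamp_mul_bound {τ : ℝ} (hτ : 0 < τ) (a b : ℝ) :
    |max (-τ) (min a τ) * max (-τ) (min b τ) - a * b| ≤ (a ^ 4 + b ^ 4) / τ ^ 2 := by
  have habs4 : ∀ t : ℝ, |t| ^ 4 = t ^ 4 := fun t => by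
    rw [← abs_pow, abs_of_nonneg (by positivity)]
  have hmixed : ∀ s t : ℝ, |s| ≤ τ → τ < |t| → |s| * (|t| - τ) * τ ^ 2 ≤ s ^ 4 + t ^ 4 := by
    intro s t hs ht
    have h1 : |s| * (|t| - τ) * τ ^ 2 ≤ τ * (|t| - τ) * τ ^ 2 :=
      mul_le_mul_of_nonneg_right
        (mul_le_mul_of_nonneg_right hs (by linarith)) (by positivity)
    have h2 : τ * (|t| - τ) * τ ^ 2 ≤ τ ^ 3 * |t| := by nlinarith [pow_nonneg hτ.le 2]
    have h3 : τ ^ 3 ≤ |t| ^ 3 := pow_le_pow_left₀ hτ.le ht.le 3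
    have h4 : τ ^ 3 * |t| ≤ |t| ^ 3 * |t| := by
      have := abs_nonneg t
      nlinarith
    have h5 : |t| ^ 3 * |t| = t ^ 4 := by rw [← pow_succ]; exact habs4 t
    have h6 : (0:ℝ) ≤ s ^ 4 := by positivity
    linarith
  rw [le_div_iff₀ (by positivity)]
  rcases le_or_gt |a| τ with ha | ha <;> rcases le_or_gt |b| τ with hb | hb
  · rw [clamp_eq_self ha, clamp_eq_self hb, sub_self, abs_zero, zero_mul]
    positivity
  · rw [clamp_eq_self ha]
    have h1 : a * max (-τ) (min b τ) - a * b = a * (max (-τ) (min b τ) - b) := by ring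
    rw [h1, abs_mul, abs_clamp_sub hτ hb]
    exact hmixed a b ha hb
  · rw [clamp_eq_self hb]
    have h1 : max (-τ) (min a τ) * b - a * b = b * (max (-τ) (min a τ) - a) := by ring
    rw [h1, abs_mul, abs_clamp_sub hτ ha]
    have := hmixed b a hb ha
    linarith
  · have h1 : |max (-τ) (min a τ) * max (-τ) (min b τ) - a * b|
        ≤ |max (-τ) (min a τ)| * |max (-τ) (min b τ)| + |a| * |b| := by
      calc _ ≤ |max (-τ) (min a τ) * max (-τ) (min b τ)| + |a * b| := abs_sub _ _
        _ = _ := by rw [abs_mul, abs_mul]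
    have h2 : |max (-τ) (min a τ)| ≤ |a| := abs_clamp_le_abs hτ.le a
    have h3 : |max (-τ) (min b τ)| ≤ |b| := abs_clamp_le_abs hτ.le b
    have h4 : |max (-τ) (min a τ) * max (-τ) (min b τ) - a * b| ≤ 2 * (|a| * |b|) := by
      nlinarith [abs_nonneg (max (-τ) (min a τ)), abs_nonneg (max (-τ) (min b τ)),
        abs_nonneg a, abs_nonneg b]
    have h5 : 2 * (|a| * |b|) * τ ^ 2 ≤ a ^ 4 + b ^ 4 := by
      nlinarith [sq_abs a, sq_abs b, sq_nonneg (a ^ 2 - b ^ 2), abs_nonneg a, abs_nonneg b,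
        mul_pos hτ hτ, mul_pos (hτ.trans ha) (hτ.trans hb),
        mul_le_mul (le_of_lt ha) (le_of_lt hb) hτ.le (abs_nonneg a)]
    nlinarith [mul_pos hτ hτ, mul_le_mul_of_nonneg_right h4 (le_of_lt (mul_pos hτ hτ) : (0:ℝ) ≤ τ * τ)]

/-- bias of the truncated second moments. -/
theorem statement13
    {Ω : Type*} [MeasurableSpace Ω] (μ : Measure Ω) [IsProbabilityMeasure μ]
    {d : ℕ} (x : Ω → Fin d → ℝ) (hx : Measurable x)
    (hmem : ∀ j, MemLp (fun ω => x ω j) 4 μ)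
    (σ4 : ℝ) (hσ4 : 0 ≤ σ4)
    (h4 : ∀ j, ∫ ω, x ω j ^ 4 ∂μ ≤ σ4 ^ 4)
    (τ : ℝ) (hτ : 0 < τ) :
    (∀ j1 j2 : Fin d,
        (∫ ω, trunc τ (x ω) j1 * trunc τ (x ω) j2 ∂μ) - ∫ ω, x ω j1 * x ω j2 ∂μ
          ≤ 2 * σ4 ^ 4 / τ ^ 2)
      ∧ ∀ j1 j2 : Fin d,
        |(∫ ω, trunc τ (x ω) j1 * trunc τ (x ω) j2 ∂μ) - ∫ ω, x ω j1 * x ω j2 ∂μ|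
          ≤ 2 * σ4 ^ 4 / τ ^ 2 := by
  have hmeas : ∀ j : Fin d, Measurable (fun ω => x ω j) :=
    fun j => (measurable_pi_apply j).comp hx
  have hTmeas : ∀ j : Fin d, Measurable (fun ω => max (-τ) (min (x ω j) τ)) :=
    fun j => measurable_const.max ((hmeas j).min measurable_const)
  -- x j1 * x j2 is integrable
  have h2 : ∀ j, MemLp (fun ω => x ω j) 2 μ := fun j =>
    (hmem j).mono_exponent (by norm_num)
  have hg : ∀ j1 j2 : Fin d, Integrable (fun ω => x ω j1 * x ω j2) μ := by
    intro j1 j2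
    have := ((h2 j2).smul (h2 j1)
      (hpqr := ⟨by rw [ENNReal.inv_two_add_inv_two, inv_one]⟩)).integrable le_rfl
    exact this
  -- x j ^ 4 is integrable
  have hx4 : ∀ j : Fin d, Integrable (fun ω => x ω j ^ 4) μ := by
    intro j
    have hsq : MemLp (fun ω => x ω j * x ω j) 2 μ := by
      have := (hmem j).smul (hmem j) (r := 2) (hpqr := ⟨by
        show (4:ENNReal)⁻¹ + 4⁻¹ = 2⁻¹
        have : (4:ENNReal) = 2 * 2 := by norm_num
        rw [this, ENNReal.mul_inv (by simp) (by simp), ← add_mul, ENNReal.inv_two_add_inv_two,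
          one_mul]⟩)
      exact this
    have h14 : Integrable (fun ω => (x ω j * x ω j) * (x ω j * x ω j)) μ := by
      have := (hsq.smul hsq (hpqr := ⟨by rw [ENNReal.inv_two_add_inv_two, inv_one]⟩)).integrable le_rfl
      exact this
    have heq : (fun ω => (x ω j * x ω j) * (x ω j * x ω j)) = fun ω => x ω j ^ 4 := by
      funext ω; ring
    rwa [heq] at h14
  -- truncated products are integrable
  have hfInt : ∀ j1 j2 : Fin d,
      Integrable (fun ω => max (-τ) (min (x ω j1) τ) * max (-τ) (min (x ω j2) τ)) μ := by
    intro j1 j2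
    refine (integrable_const (τ ^ 2)).mono'
      (((hTmeas j1).mul (hTmeas j2)).aestronglyMeasurable) (ae_of_all _ fun ω => ?_)
    rw [Real.norm_eq_abs, abs_mul, pow_two]
    exact mul_le_mul (abs_clamp_le_tau hτ.le _) (abs_clamp_le_tau hτ.le _)
      (abs_nonneg _) hτ.le
  -- rewrite trunc as clamp
  have htr : ∀ j1 j2 : Fin d,
      (∫ ω, trunc τ (x ω) j1 * trunc τ (x ω) j2 ∂μ)
        = ∫ ω, max (-τ) (min (x ω j1) τ) * max (-τ) (min (x ω j2) τ) ∂μ := by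
    intro j1 j2
    refine integral_congr_ae (ae_of_all _ fun ω => ?_)
    simp only [trunc, trunc_eq_clamp hτ.le]
  -- main estimate
  have hmain : ∀ j1 j2 : Fin d,
      |(∫ ω, trunc τ (x ω) j1 * trunc τ (x ω) j2 ∂μ) - ∫ ω, x ω j1 * x ω j2 ∂μ|
        ≤ 2 * σ4 ^ 4 / τ ^ 2 := by
    intro j1 j2
    rw [htr j1 j2, ← integral_sub (hfInt j1 j2) (hg j1 j2)]
    have hb : Integrable (fun ω => (x ω j1 ^ 4 + x ω j2 ^ 4) / τ ^ 2) μ :=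
      ((hx4 j1).add (hx4 j2)).div_const _
    calc |∫ ω, (max (-τ) (min (x ω j1) τ) * max (-τ) (min (x ω j2) τ)
            - x ω j1 * x ω j2) ∂μ|
        ≤ ∫ ω, |max (-τ) (min (x ω j1) τ) * max (-τ) (min (x ω j2) τ)
            - x ω j1 * x ω j2| ∂μ := by
          simpa [Real.norm_eq_abs] using
            norm_integral_le_integral_norm (fun ω =>
              max (-τ) (min (x ω j1) τ) * max (-τ) (min (x ω j2) τ) - x ω j1 * x ω j2) (μ := μ)
      _ ≤ ∫ ω, (x ω j1 ^ 4 + x ω j2 ^ 4) / τ ^ 2 ∂μ := by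
          refine integral_mono ((hfInt j1 j2).sub (hg j1 j2)).abs hb fun ω => ?_
          exact clamp_mul_bound hτ _ _
      _ = ((∫ ω, x ω j1 ^ 4 ∂μ) + ∫ ω, x ω j2 ^ 4 ∂μ) / τ ^ 2 := by
          rw [integral_div, integral_add (hx4 j1) (hx4 j2)]
      _ ≤ 2 * σ4 ^ 4 / τ ^ 2 := by
          have h1 := h4 j1
          have h2 := h4 j2
          have hτ2 : (0:ℝ) < τ ^ 2 := by positivity
          gcongr
          linarith
  exact ⟨fun j1 j2 => (le_abs_self _).trans (hmain j1 j2), hmain⟩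

end RobustSparse
end
end

section
/- Let x be a random vector in ℝ^d with E[(x_{j₁} x_{j₂} x_{j₃} x_{j₄})²] ≤ σ_{x,8}^8 for all coordinates 1 ≤ j₁, j₂, j₃, j₄ ≤ d, and let x̃ be its coordinatewise truncation at level τ_x > 0. Then for all 1 ≤ j₁, j₂ ≤ d, E[(x_{j₁} − x̃_{j₁})(x_{j₂} − x̃_{j₂})] ≤ σ_{x,8}^8 / τ_x^6, and consequently for every β ∈ ℝ^d, √(E[((x̃ − x)ᵀ β)²]) ≤ ‖β‖₁ σ_{x,8}^4 / τ_x³. -/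
open MeasureTheory ProbabilityTheory Matrix Finset Real

noncomputable section

namespace RobustSparse

lemma measurable_rsign : Measurable Real.sign := by
  unfold Real.sign
  exact Measurable.ite (measurableSet_lt measurable_id measurable_const) measurable_const
    (Measurable.ite (measurableSet_lt measurable_const measurable_id) measurable_const
      measurable_const)

lemma rsign_mul_abs (t : ℝ) : Real.sign t * |t| = t := by
  rcases lt_trichotomy t 0 with hlt | heq | hgt
  · rw [Real.sign_of_neg hlt, abs_of_neg hlt]; ring
  · simp [heq]
  · rw [Real.sign_of_pos hgt, abs_of_pos hgt]; ring

lemma abs_err_le {τ : ℝ} (hτ : 0 < τ) (t : ℝ) :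
    |t - Real.sign t * min |t| τ| ≤ t ^ 4 / τ ^ 3 := by
  rcases le_or_gt |t| τ with h | h
  · rw [min_eq_left h, rsign_mul_abs, sub_self, abs_zero]
    positivity
  · rw [min_eq_right h.le]
    have h1 : |t - Real.sign t * τ| = |t| - τ := by
      rcases lt_trichotomy t 0 with hlt | heq | hgt
      · rw [Real.sign_of_neg hlt]
        have hab : |t| = -t := abs_of_neg hlt
        rw [hab] at h ⊢
        rw [abs_of_neg (by linarith : t - (-1) * τ < 0)]; ring
      · subst heq; simp at h; linarith
      · rw [Real.sign_of_pos hgt]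
        have hab : |t| = t := abs_of_pos hgt
        rw [hab] at h ⊢
        rw [abs_of_nonneg (by linarith : (0:ℝ) ≤ t - 1 * τ)]; ring
    rw [h1, le_div_iff₀ (by positivity)]
    have h2 : t ^ 4 = |t| ^ 4 := by rw [← abs_pow]; exact (abs_of_nonneg (by positivity)).symm
    rw [h2]
    have h3 : τ ^ 3 ≤ |t| ^ 3 := pow_le_pow_left₀ hτ.le h.le 3
    nlinarith [abs_nonneg t, pow_nonneg hτ.le 4, mul_le_mul_of_nonneg_left h3 (abs_nonneg t)]

/-- second moments of the truncation error. -/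
theorem statement14
    {Ω : Type*} [MeasurableSpace Ω] (μ : Measure Ω) [IsProbabilityMeasure μ]
    {d : ℕ} (x : Ω → Fin d → ℝ) (hx : Measurable x)
    (hmem : ∀ j, MemLp (fun ω => x ω j) 8 μ)
    (σ8 : ℝ) (hσ8 : 0 ≤ σ8)
    (h8 : ∀ j1 j2 j3 j4 : Fin d,
      ∫ ω, (x ω j1 * x ω j2 * x ω j3 * x ω j4) ^ 2 ∂μ ≤ σ8 ^ 8)
    (τ : ℝ) (hτ : 0 < τ) :
    (∀ j1 j2 : Fin d,
        ∫ ω, (x ω j1 - trunc τ (x ω) j1) * (x ω j2 - trunc τ (x ω) j2) ∂μ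
          ≤ σ8 ^ 8 / τ ^ 6)
      ∧ ∀ β : Fin d → ℝ,
        Real.sqrt (∫ ω, ip (fun j => trunc τ (x ω) j - x ω j) β ^ 2 ∂μ)
          ≤ l1 β * σ8 ^ 4 / τ ^ 3 := by
  have hxm : ∀ j : Fin d, Measurable fun ω => x ω j := fun j => (measurable_pi_apply j).comp hx
  have hem : ∀ j : Fin d, Measurable fun ω => x ω j - trunc τ (x ω) j := fun j =>
    (hxm j).sub ((measurable_rsign.comp (hxm j)).mul (((hxm j).abs).min measurable_const))
  have hint8 : ∀ j : Fin d, Integrable (fun ω => x ω j ^ 8) μ := by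
    intro j
    have h0 := (hmem j).integrable_norm_rpow (by norm_num) (by norm_num)
    have heq : (fun ω => ‖x ω j‖ ^ (8 : ENNReal).toReal) = fun ω => x ω j ^ 8 := by
      funext ω
      simp only [ENNReal.toReal_ofNat, Real.norm_eq_abs]
      rw [show ((8:ℝ)) = ((8:ℕ):ℝ) by norm_num, Real.rpow_natCast]
      exact Even.pow_abs ⟨4, by norm_num⟩ _
    rwa [heq] at h0
  have hintg : ∀ j k : Fin d, Integrable (fun ω => (x ω j * x ω j * x ω k * x ω k) ^ 2) μ := by
    intro j k
    refine Integrable.mono' (((hint8 j).add (hint8 k)).div_const 2)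
      (((((hxm j).mul (hxm j)).mul (hxm k)).mul (hxm k)).pow_const 2).aestronglyMeasurable
      (ae_of_all _ fun ω => ?_)
    have h1 : (x ω j * x ω j * x ω k * x ω k) ^ 2 = x ω j ^ 4 * x ω k ^ 4 := by ring
    rw [Real.norm_eq_abs, abs_of_nonneg (sq_nonneg _), h1]
    show x ω j ^ 4 * x ω k ^ 4 ≤ (x ω j ^ 8 + x ω k ^ 8) / 2
    nlinarith [sq_nonneg (x ω j ^ 4 - x ω k ^ 4)]
  have hb : ∀ (j k : Fin d) (ω : Ω), |(x ω j - trunc τ (x ω) j) * (x ω k - trunc τ (x ω) k)|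
      ≤ (x ω j * x ω j * x ω k * x ω k) ^ 2 / τ ^ 6 := by
    intro j k ω
    rw [abs_mul]
    calc |x ω j - trunc τ (x ω) j| * |x ω k - trunc τ (x ω) k|
        ≤ (x ω j ^ 4 / τ ^ 3) * (x ω k ^ 4 / τ ^ 3) :=
          mul_le_mul (abs_err_le hτ (x ω j)) (abs_err_le hτ (x ω k)) (abs_nonneg _)
            (by positivity)
      _ = (x ω j * x ω j * x ω k * x ω k) ^ 2 / τ ^ 6 := by
          field_simp
  have hinte : ∀ j k : Fin d,
      Integrable (fun ω => (x ω j - trunc τ (x ω) j) * (x ω k - trunc τ (x ω) k)) μ := by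
    intro j k
    refine Integrable.mono' ((hintg j k).div_const (τ ^ 6))
      (((hem j).mul (hem k)).aestronglyMeasurable) (ae_of_all _ fun ω => ?_)
    rw [Real.norm_eq_abs]
    exact hb j k ω
  have habs : ∀ j k : Fin d,
      ∫ ω, |(x ω j - trunc τ (x ω) j) * (x ω k - trunc τ (x ω) k)| ∂μ ≤ σ8 ^ 8 / τ ^ 6 := by
    intro j k
    calc ∫ ω, |(x ω j - trunc τ (x ω) j) * (x ω k - trunc τ (x ω) k)| ∂μ
        ≤ ∫ ω, (x ω j * x ω j * x ω k * x ω k) ^ 2 / τ ^ 6 ∂μ :=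
          integral_mono (hinte j k).abs ((hintg j k).div_const _) (hb j k)
      _ = (∫ ω, (x ω j * x ω j * x ω k * x ω k) ^ 2 ∂μ) / τ ^ 6 := integral_div _ _
      _ ≤ σ8 ^ 8 / τ ^ 6 := by gcongr; exact h8 j j k k
  refine ⟨fun j1 j2 => ?_, fun β => ?_⟩
  · calc ∫ ω, (x ω j1 - trunc τ (x ω) j1) * (x ω j2 - trunc τ (x ω) j2) ∂μ
        ≤ ∫ ω, |(x ω j1 - trunc τ (x ω) j1) * (x ω j2 - trunc τ (x ω) j2)| ∂μ :=
          integral_mono (hinte j1 j2) (hinte j1 j2).abs fun ω => le_abs_self _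
      _ ≤ σ8 ^ 8 / τ ^ 6 := habs j1 j2
  · have hl1 : 0 ≤ l1 β := Finset.sum_nonneg fun _ _ => abs_nonneg _
    have hexp : ∀ ω : Ω, ip (fun j => trunc τ (x ω) j - x ω j) β ^ 2
        = ∑ j, ∑ k, (β j * β k) *
            ((x ω j - trunc τ (x ω) j) * (x ω k - trunc τ (x ω) k)) := by
      intro ω
      simp only [ip]
      rw [sq, Finset.sum_mul_sum]
      exact Finset.sum_congr rfl fun j _ => Finset.sum_congr rfl fun k _ => by ring
    have hterm : ∀ j k : Fin d,
        ∫ ω, (β j * β k) * ((x ω j - trunc τ (x ω) j) * (x ω k - trunc τ (x ω) k)) ∂μ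
          ≤ |β j| * |β k| * (σ8 ^ 8 / τ ^ 6) := by
      intro j k
      rw [integral_const_mul]
      calc β j * β k * ∫ ω, (x ω j - trunc τ (x ω) j) * (x ω k - trunc τ (x ω) k) ∂μ
          ≤ |β j * β k * ∫ ω, (x ω j - trunc τ (x ω) j) * (x ω k - trunc τ (x ω) k) ∂μ| :=
            le_abs_self _
        _ = |β j| * |β k| *
              |∫ ω, (x ω j - trunc τ (x ω) j) * (x ω k - trunc τ (x ω) k) ∂μ| := by
            rw [abs_mul, abs_mul]
        _ ≤ |β j| * |β k| * (σ8 ^ 8 / τ ^ 6) := by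
            refine mul_le_mul_of_nonneg_left ?_ (by positivity)
            calc |∫ ω, (x ω j - trunc τ (x ω) j) * (x ω k - trunc τ (x ω) k) ∂μ|
                ≤ ∫ ω, |(x ω j - trunc τ (x ω) j) * (x ω k - trunc τ (x ω) k)| ∂μ := by
                  simpa [Real.norm_eq_abs, abs_mul] using norm_integral_le_integral_norm
                    (μ := μ) (fun ω => (x ω j - trunc τ (x ω) j) * (x ω k - trunc τ (x ω) k))
              _ ≤ σ8 ^ 8 / τ ^ 6 := habs j k
    have hsum : ∫ ω, ip (fun j => trunc τ (x ω) j - x ω j) β ^ 2 ∂μ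
        ≤ (l1 β) ^ 2 * (σ8 ^ 8 / τ ^ 6) := by
      calc ∫ ω, ip (fun j => trunc τ (x ω) j - x ω j) β ^ 2 ∂μ
          = ∫ ω, ∑ j, ∑ k, (β j * β k) *
              ((x ω j - trunc τ (x ω) j) * (x ω k - trunc τ (x ω) k)) ∂μ :=
            integral_congr_ae (ae_of_all _ hexp)
        _ = ∑ j, ∑ k, ∫ ω, (β j * β k) *
              ((x ω j - trunc τ (x ω) j) * (x ω k - trunc τ (x ω) k)) ∂μ := by
            rw [integral_finset_sum _ fun j _ =>
              integrable_finset_sum _ fun k _ => (hinte j k).const_mul _]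
            exact Finset.sum_congr rfl fun j _ =>
              integral_finset_sum _ fun k _ => (hinte j k).const_mul _
        _ ≤ ∑ j, ∑ k, |β j| * |β k| * (σ8 ^ 8 / τ ^ 6) :=
            Finset.sum_le_sum fun j _ => Finset.sum_le_sum fun k _ => hterm j k
        _ = (l1 β) ^ 2 * (σ8 ^ 8 / τ ^ 6) := by
            simp only [l1, sq, Finset.sum_mul, Finset.mul_sum]
            exact Finset.sum_congr rfl fun j _ => Finset.sum_congr rfl fun k _ => by ring
    have hfin : (l1 β) ^ 2 * (σ8 ^ 8 / τ ^ 6) = (l1 β * σ8 ^ 4 / τ ^ 3) ^ 2 := by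
      field_simp
    calc Real.sqrt (∫ ω, ip (fun j => trunc τ (x ω) j - x ω j) β ^ 2 ∂μ)
        ≤ Real.sqrt ((l1 β * σ8 ^ 4 / τ ^ 3) ^ 2) :=
          Real.sqrt_le_sqrt (by rw [← hfin]; exact hsum)
      _ = l1 β * σ8 ^ 4 / τ ^ 3 :=
          Real.sqrt_sq (div_nonneg (mul_nonneg hl1 (by positivity)) (by positivity))


end RobustSparse
end
end

section
/- Let x be a random vector in ℝ^d with zero mean and σ_{x,4}^4 = max_j E[x_j^4] finite, let x̃ be its coordinatewise truncation at level τ_x > 0, let Σ = E[x xᵀ], and let λ_Σ > 0 be the smallest singular value of Σ^{1/2}. Then for every v ∈ ℝ^d with ‖v‖₁ ≤ 3√s ‖v‖₂, one has E[(x̃ᵀ v)²] ≥ λ_Σ² ‖v‖₂² − 18 (σ_{x,4}^4 / τ_x²) s ‖v‖₂². -/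
open MeasureTheory ProbabilityTheory Matrix Finset Real

noncomputable section

namespace RobustSparse

lemma trunc_eq (τ a : ℝ) (hτ : 0 < τ) :
    Real.sign a * min |a| τ = max (-τ) (min a τ) := by
  rcases lt_trichotomy a 0 with h | h | h
  · rw [Real.sign_of_neg h, abs_of_neg h]
    rw [min_eq_left (le_of_lt (lt_of_lt_of_le h hτ.le)), max_comm]
    rcases le_total (-a) τ with h2 | h2
    · rw [min_eq_left h2, max_eq_left (by linarith)]; ring
    · rw [min_eq_right h2, max_eq_right (by linarith)]; ring
  · simp [h, hτ.le]
  · rw [Real.sign_of_pos h, abs_of_pos h, one_mul,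
      max_eq_right (le_trans (by linarith) (le_min h.le hτ.le) |>.trans (le_of_eq rfl))]

lemma abs_trunc_le (τ a : ℝ) (hτ : 0 < τ) : |Real.sign a * min |a| τ| ≤ τ := by
  rw [trunc_eq τ a hτ, abs_le]
  exact ⟨le_max_left _ _, max_le (by linarith) (min_le_right _ _)⟩

lemma abs_sub_trunc_le (τ a : ℝ) (hτ : 0 < τ) :
    |a - Real.sign a * min |a| τ| ≤ |a| ^ 3 / τ ^ 2 := by
  rw [trunc_eq τ a hτ]
  rcases le_or_gt |a| τ with h | h
  · obtain ⟨h1, h2⟩ := abs_le.mp h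
    rw [min_eq_left h2, max_eq_right h1, sub_self, abs_zero]
    positivity
  · have h0 : 0 < |a| := lt_trans hτ h
    have key : |a| ≤ |a| ^ 3 / τ ^ 2 := by
      rw [le_div_iff₀ (by positivity)]
      nlinarith [mul_nonneg (mul_nonneg h0.le (sub_nonneg.mpr h.le))
        (by positivity : (0:ℝ) ≤ |a| + τ)]
    rcases le_or_gt a 0 with ha | ha
    · have : a < -τ := by rw [abs_of_nonpos ha] at h; linarith
      rw [min_eq_left (by linarith), max_eq_left (by linarith)]
      rw [abs_of_nonpos (by linarith), abs_of_nonpos ha] at *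
      linarith
    · have : τ < a := by rwa [abs_of_pos ha] at h
      rw [min_eq_right (by linarith), max_eq_right (by linarith)]
      rw [abs_of_pos ha] at key ⊢
      rw [abs_of_nonneg (by linarith)]
      linarith

lemma young4 (a b : ℝ) (ha : 0 ≤ a) (hb : 0 ≤ b) : a * b ^ 3 ≤ a ^ 4 / 4 + 3 * b ^ 4 / 4 := by
  nlinarith [sq_nonneg (a - b), sq_nonneg (a + b), mul_nonneg ha hb, sq_nonneg a, sq_nonneg b]

lemma abs4 (a : ℝ) : |a| ^ 4 = a ^ 4 := by
  rw [← abs_pow, abs_of_nonneg (by positivity)]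

lemma ptbound (τ a b : ℝ) (hτ : 0 < τ) :
    |a * (b - Real.sign b * min |b| τ)| ≤ (a ^ 4 + 3 * b ^ 4) / (4 * τ ^ 2) := by
  rw [abs_mul]
  calc |a| * |b - Real.sign b * min |b| τ|
      ≤ |a| * (|b| ^ 3 / τ ^ 2) :=
        mul_le_mul_of_nonneg_left (abs_sub_trunc_le τ b hτ) (abs_nonneg a)
    _ = (|a| * |b| ^ 3) / τ ^ 2 := (mul_div_assoc _ _ _).symm
    _ ≤ (|a| ^ 4 / 4 + 3 * |b| ^ 4 / 4) / τ ^ 2 := by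
        have := young4 |a| |b| (abs_nonneg _) (abs_nonneg _)
        gcongr
    _ = (a ^ 4 + 3 * b ^ 4) / (4 * τ ^ 2) := by
        rw [abs4, abs4]; field_simp


/-- lower bound for the truncated quadratic form on the cone. -/
theorem statement16
    {Ω : Type*} [MeasurableSpace Ω] (μ : Measure Ω) [IsProbabilityMeasure μ]
    {d s : ℕ} (hs : 1 ≤ s) (x : Ω → Fin d → ℝ) (hx : Measurable x)
    (hmem : ∀ j, MemLp (fun ω => x ω j) 4 μ)
    (hmean : ∀ j, ∫ ω, x ω j ∂μ = 0)
    (σ4 : ℝ) (hσ4 : 0 ≤ σ4)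
    (h4 : ∀ j, ∫ ω, x ω j ^ 4 ∂μ ≤ σ4 ^ 4)
    (Ssq : Matrix (Fin d) (Fin d) ℝ) (hpsd : Ssq.PosSemidef)
    (hSsq : Ssq * Ssq = Matrix.of fun j k => ∫ ω, x ω j * x ω k ∂μ)
    (lamSig : ℝ) (hlamSig : 0 < lamSig)
    (hsv : ∀ v : Fin d → ℝ, lamSig * l2 v ≤ l2 (Ssq *ᵥ v))
    (τ : ℝ) (hτ : 0 < τ) :
    ∀ v : Fin d → ℝ, l1 v ≤ 3 * Real.sqrt s * l2 v →
      ∫ ω, ip (trunc τ (x ω)) v ^ 2 ∂μ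
        ≥ lamSig ^ 2 * l2 v ^ 2 - 18 * (σ4 ^ 4 / τ ^ 2) * s * l2 v ^ 2 := by
  intro v hcone
  have hXm : ∀ j, Measurable fun ω => x ω j := fun j => (measurable_pi_apply j).comp hx
  have hTm : ∀ j, Measurable fun ω => trunc τ (x ω) j := by
    intro j
    have e : (fun ω => trunc τ (x ω) j) = fun ω => max (-τ) (min (x ω j) τ) := by
      funext ω; exact trunc_eq τ (x ω j) hτ
    rw [e]
    exact measurable_const.max ((hXm j).min measurable_const)
  have hint4 : ∀ j, Integrable (fun ω => x ω j ^ 4) μ := by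
    intro j
    have h := (hmem j).integrable_norm_rpow (by norm_num) (by norm_num)
    have he : (fun ω => ‖x ω j‖ ^ ((4:ENNReal).toReal)) = fun ω => x ω j ^ 4 := by
      funext ω
      rw [show ((4:ENNReal).toReal) = ((4:ℕ):ℝ) by norm_num, Real.rpow_natCast,
        Real.norm_eq_abs, abs4]
    rwa [he] at h
  have hintsq : ∀ j, Integrable (fun ω => x ω j ^ 2) μ := fun j =>
    ((hmem j).mono_exponent (by norm_num)).integrable_sq
  have hintjk : ∀ j k, Integrable (fun ω => x ω j * x ω k) μ := by
    intro j k
    refine Integrable.mono' (((hintsq j).add (hintsq k)).div_const 2)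
      (((hXm j).mul (hXm k)).aestronglyMeasurable) (ae_of_all _ fun ω => ?_)
    rw [Real.norm_eq_abs, abs_mul]
    simp only [Pi.add_apply]
    nlinarith [sq_nonneg (|x ω j| - |x ω k|), sq_abs (x ω j), sq_abs (x ω k),
      abs_nonneg (x ω j), abs_nonneg (x ω k)]
  have hintD : ∀ j k, Integrable (fun ω => x ω j * (x ω k - trunc τ (x ω) k)) μ := by
    intro j k
    refine Integrable.mono' (((hint4 j).add ((hint4 k).const_mul 3)).div_const (4 * τ ^ 2))
      (((hXm j).mul ((hXm k).sub (hTm k))).aestronglyMeasurable) (ae_of_all _ fun ω => ?_)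
    rw [Real.norm_eq_abs]
    simpa [trunc] using ptbound τ (x ω j) (x ω k) hτ
  -- bound on the cross integrals
  have hIbound : ∀ j k, |∫ ω, x ω j * (x ω k - trunc τ (x ω) k) ∂μ| ≤ σ4 ^ 4 / τ ^ 2 := by
    intro j k
    have step1 : |∫ ω, x ω j * (x ω k - trunc τ (x ω) k) ∂μ|
        ≤ ∫ ω, |x ω j * (x ω k - trunc τ (x ω) k)| ∂μ := by
      simpa only [Real.norm_eq_abs] using
        norm_integral_le_integral_norm (μ := μ) (fun ω => x ω j * (x ω k - trunc τ (x ω) k))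
    have step2 : ∫ ω, |x ω j * (x ω k - trunc τ (x ω) k)| ∂μ
        ≤ ∫ ω, (x ω j ^ 4 + 3 * x ω k ^ 4) / (4 * τ ^ 2) ∂μ := by
      refine integral_mono (hintD j k).abs
        (((hint4 j).add ((hint4 k).const_mul 3)).div_const (4 * τ ^ 2)) fun ω => ?_
      simpa [trunc] using ptbound τ (x ω j) (x ω k) hτ
    have step3 : ∫ ω, (x ω j ^ 4 + 3 * x ω k ^ 4) / (4 * τ ^ 2) ∂μ
        = ((∫ ω, x ω j ^ 4 ∂μ) + 3 * ∫ ω, x ω k ^ 4 ∂μ) / (4 * τ ^ 2) := by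
      rw [integral_div, integral_add (hint4 j) ((hint4 k).const_mul 3), integral_const_mul]
    have step4 : ((∫ ω, x ω j ^ 4 ∂μ) + 3 * ∫ ω, x ω k ^ 4 ∂μ) / (4 * τ ^ 2)
        ≤ (σ4 ^ 4 + 3 * σ4 ^ 4) / (4 * τ ^ 2) := by
      gcongr
      · exact h4 j
      · exact h4 k
    have step5 : (σ4 ^ 4 + 3 * σ4 ^ 4) / (4 * τ ^ 2) = σ4 ^ 4 / τ ^ 2 := by
      field_simp; ring
    calc |∫ ω, x ω j * (x ω k - trunc τ (x ω) k) ∂μ|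
        ≤ ∫ ω, |x ω j * (x ω k - trunc τ (x ω) k)| ∂μ := step1
      _ ≤ ∫ ω, (x ω j ^ 4 + 3 * x ω k ^ 4) / (4 * τ ^ 2) ∂μ := step2
      _ = _ := step3
      _ ≤ _ := step4
      _ = _ := step5
  -- the three functions
  set g : Ω → ℝ := fun ω => ∑ j, x ω j * v j with hg
  set hh : Ω → ℝ := fun ω => ∑ j, (x ω j - trunc τ (x ω) j) * v j with hhh
  set f : Ω → ℝ := fun ω => ∑ j, trunc τ (x ω) j * v j with hf
  have hfe : ∀ ω, ip (trunc τ (x ω)) v = f ω := fun ω => rfl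
  have hgf : ∀ ω, f ω = g ω - hh ω := by
    intro ω
    simp only [hg, hhh, hf, ← Finset.sum_sub_distrib]
    exact Finset.sum_congr rfl fun j _ => by ring
  -- integrability of the pieces
  have hg2e : ∀ ω, g ω ^ 2 = ∑ j, ∑ k, v j * v k * (x ω j * x ω k) := by
    intro ω
    rw [sq, hg, Finset.sum_mul_sum]
    exact Finset.sum_congr rfl fun j _ => Finset.sum_congr rfl fun k _ => by ring
  have hghe : ∀ ω, g ω * hh ω = ∑ j, ∑ k, v j * v k * (x ω j * (x ω k - trunc τ (x ω) k)) := by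
    intro ω
    rw [hg, hhh, Finset.sum_mul_sum]
    exact Finset.sum_congr rfl fun j _ => Finset.sum_congr rfl fun k _ => by ring
  have hg2int : Integrable (fun ω => g ω ^ 2) μ := by
    rw [show (fun ω => g ω ^ 2) = fun ω => ∑ j, ∑ k, v j * v k * (x ω j * x ω k) from
      funext hg2e]
    exact integrable_finset_sum _ fun j _ =>
      integrable_finset_sum _ fun k _ => (hintjk j k).const_mul _
  have hghint : Integrable (fun ω => g ω * hh ω) μ := by
    rw [show (fun ω => g ω * hh ω) =
      fun ω => ∑ j, ∑ k, v j * v k * (x ω j * (x ω k - trunc τ (x ω) k)) from funext hghe]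
    exact integrable_finset_sum _ fun j _ =>
      integrable_finset_sum _ fun k _ => (hintD j k).const_mul _
  have hf2int : Integrable (fun ω => f ω ^ 2) μ := by
    refine Integrable.mono' (integrable_const ((τ * l1 v) ^ 2))
      ((Finset.measurable_sum _ fun j _ => (hTm j).mul_const (v j)).pow_const 2
        |>.aestronglyMeasurable) (ae_of_all _ fun ω => ?_)
    rw [Real.norm_eq_abs, abs_pow]
    have hb : |f ω| ≤ τ * l1 v := by
      refine le_trans (Finset.abs_sum_le_sum_abs _ _) ?_
      rw [l1, Finset.mul_sum]
      refine Finset.sum_le_sum fun j _ => ?_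
      rw [abs_mul]
      exact mul_le_mul_of_nonneg_right (abs_trunc_le τ (x ω j) hτ) (abs_nonneg _)
    exact pow_le_pow_left₀ (abs_nonneg _) hb 2
  -- value of ∫ g²
  have hg2val : ∫ ω, g ω ^ 2 ∂μ = ∑ j, ∑ k, v j * v k * ∫ ω, x ω j * x ω k ∂μ := by
    rw [show (fun ω => g ω ^ 2) = fun ω => ∑ j, ∑ k, v j * v k * (x ω j * x ω k) from
      funext hg2e]
    rw [integral_finset_sum _ fun j _ =>
      integrable_finset_sum _ fun k _ => (hintjk j k).const_mul _]
    refine Finset.sum_congr rfl fun j _ => ?_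
    rw [integral_finset_sum _ fun k _ => (hintjk j k).const_mul _]
    exact Finset.sum_congr rfl fun k _ => integral_const_mul _ _
  have hghval : ∫ ω, g ω * hh ω ∂μ
      = ∑ j, ∑ k, v j * v k * ∫ ω, x ω j * (x ω k - trunc τ (x ω) k) ∂μ := by
    rw [show (fun ω => g ω * hh ω) =
      fun ω => ∑ j, ∑ k, v j * v k * (x ω j * (x ω k - trunc τ (x ω) k)) from funext hghe]
    rw [integral_finset_sum _ fun j _ =>
      integrable_finset_sum _ fun k _ => (hintD j k).const_mul _]
    refine Finset.sum_congr rfl fun j _ => ?_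
    rw [integral_finset_sum _ fun k _ => (hintD j k).const_mul _]
    exact Finset.sum_congr rfl fun k _ => integral_const_mul _ _
  -- matrix identity
  have htr : Ssqᵀ = Ssq := by
    ext i j
    simpa using hpsd.1.apply i j
  have hmat : ∀ j k, (∫ ω, x ω j * x ω k ∂μ) = (Ssq * Ssq) j k := by
    intro j k; rw [hSsq]; rfl
  have hquad : ∑ j, ∑ k, v j * v k * (∫ ω, x ω j * x ω k ∂μ) = ∑ i, (Ssq *ᵥ v) i ^ 2 := by
    simp_rw [hmat]
    have hvm : v ᵥ* Ssq = Ssq *ᵥ v := by rw [← Matrix.mulVec_transpose, htr]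
    calc ∑ j, ∑ k, v j * v k * (Ssq * Ssq) j k
        = v ⬝ᵥ ((Ssq * Ssq) *ᵥ v) := by
          simp only [dotProduct, Matrix.mulVec, Finset.mul_sum]
          exact Finset.sum_congr rfl fun j _ => Finset.sum_congr rfl fun k _ => by ring
      _ = (Ssq *ᵥ v) ⬝ᵥ (Ssq *ᵥ v) := by
          rw [← Matrix.mulVec_mulVec, dotProduct_mulVec, hvm]
      _ = ∑ i, (Ssq *ᵥ v) i ^ 2 := by
          simp [dotProduct, sq]
  have hl2sq : ∀ (w : Fin d → ℝ), l2 w ^ 2 = ∑ i, w i ^ 2 := fun w =>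
    Real.sq_sqrt (Finset.sum_nonneg fun i _ => sq_nonneg _)
  have hg2low : lamSig ^ 2 * l2 v ^ 2 ≤ ∫ ω, g ω ^ 2 ∂μ := by
    rw [hg2val, hquad, ← hl2sq]
    calc lamSig ^ 2 * l2 v ^ 2 = (lamSig * l2 v) ^ 2 := by ring
      _ ≤ l2 (Ssq *ᵥ v) ^ 2 :=
          pow_le_pow_left₀ (mul_nonneg hlamSig.le (Real.sqrt_nonneg _)) (hsv v) 2
  -- bound on ∫ g h
  have hl1nn : 0 ≤ l1 v := Finset.sum_nonneg fun j _ => abs_nonneg _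
  have hghbd : ∫ ω, g ω * hh ω ∂μ ≤ l1 v ^ 2 * (σ4 ^ 4 / τ ^ 2) := by
    rw [hghval]
    calc ∑ j, ∑ k, v j * v k * ∫ ω, x ω j * (x ω k - trunc τ (x ω) k) ∂μ
        ≤ ∑ j, ∑ k, |v j| * |v k| * (σ4 ^ 4 / τ ^ 2) := by
          refine Finset.sum_le_sum fun j _ => Finset.sum_le_sum fun k _ => ?_
          refine le_trans (le_abs_self _) ?_
          rw [abs_mul, abs_mul]
          exact mul_le_mul_of_nonneg_left (hIbound j k)
            (mul_nonneg (abs_nonneg _) (abs_nonneg _))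
      _ = (∑ j, ∑ k, |v j| * |v k|) * (σ4 ^ 4 / τ ^ 2) := by
          rw [Finset.sum_mul]
          refine Finset.sum_congr rfl fun j _ => ?_
          rw [Finset.sum_mul]
      _ = l1 v ^ 2 * (σ4 ^ 4 / τ ^ 2) := by
          congr 1
          rw [l1, sq, Finset.sum_mul_sum]
  have hl1sq : l1 v ^ 2 ≤ 9 * s * l2 v ^ 2 := by
    calc l1 v ^ 2 ≤ (3 * Real.sqrt s * l2 v) ^ 2 := pow_le_pow_left₀ hl1nn hcone 2
      _ = 9 * (Real.sqrt s) ^ 2 * l2 v ^ 2 := by ring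
      _ = 9 * s * l2 v ^ 2 := by rw [Real.sq_sqrt (Nat.cast_nonneg s)]
  -- pointwise and final assembly
  have hpt : ∀ ω, g ω ^ 2 - 2 * (g ω * hh ω) ≤ f ω ^ 2 := by
    intro ω
    rw [hgf ω]
    nlinarith [sq_nonneg (hh ω)]
  have hmain : ∫ ω, g ω ^ 2 - 2 * (g ω * hh ω) ∂μ ≤ ∫ ω, f ω ^ 2 ∂μ :=
    integral_mono (hg2int.sub ((hghint).const_mul 2)) hf2int hpt
  rw [integral_sub hg2int ((hghint).const_mul 2), integral_const_mul] at hmain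
  have hσnn : (0:ℝ) ≤ σ4 ^ 4 / τ ^ 2 := by positivity
  have h2 : l1 v ^ 2 * (σ4 ^ 4 / τ ^ 2) ≤ 9 * s * l2 v ^ 2 * (σ4 ^ 4 / τ ^ 2) :=
    mul_le_mul_of_nonneg_right hl1sq hσnn
  have hge : ∫ ω, ip (trunc τ (x ω)) v ^ 2 ∂μ = ∫ ω, f ω ^ 2 ∂μ := by
    simp only [hfe]
  rw [ge_iff_le, hge]
  have := hghbd.trans h2
  nlinarith [this, hg2low, hmain]


end RobustSparse
end
end
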